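/- arXiv:1709.02212 — 8 statements merged into one kernel-verified Lean document; each statement's English description precedes it below -/
import Mathlib

section
/- Let A be an n×n real symmetric matrix with n ≥ 2, and let A′ be the (n−1)×(n−1) matrix obtained from A by deleting its i-th row and i-th column, for some index i. If λ₁(A) ≥ λ₂(A) ≥ ⋯ ≥ λₙ(A) denote the eigenvalues of A in nonincreasing order and λ₁(A′) ≥ ⋯ ≥ λ_{n−1}(A′) those of A′, then λₖ(A) ≥ λₖ(A′) ≥ λ_{k+1}(A) for every k ∈ {1, …, n−1}. -/
open Matrix Polynomial

theorem charpoly_unitary_conj {N : ℕ} (U : Matrix (Fin N) (Fin N) ℝ)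
    (hU : U ∈ Matrix.unitaryGroup (Fin N) ℝ) (D : Matrix (Fin N) (Fin N) ℝ) :
    (U * D * star U).charpoly = D.charpoly := by
  have h1 : U * star U = 1 := (Matrix.mem_unitaryGroup_iff).mp hU
  have h2 : star U * U = 1 := (Matrix.mem_unitaryGroup_iff').mp hU
  unfold Matrix.charpoly
  have key : charmatrix (U * D * star U) =
      (C.mapMatrix U) * charmatrix D * (C.mapMatrix (star U)) := by
    unfold Matrix.charmatrix
    rw [mul_sub, sub_mul]
    congr 1
    · rw [mul_assoc, (Matrix.scalar_commute (X : Polynomial ℝ) (Commute.all _) _).eq,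
        ← mul_assoc, ← _root_.map_mul, h1, _root_.map_one, one_mul]
    · rw [← _root_.map_mul, ← _root_.map_mul]
  rw [key, Matrix.det_mul, Matrix.det_mul, mul_comm, ← mul_assoc, ← Matrix.det_mul,
    ← (_root_.map_mul C.mapMatrix _ _), h2, _root_.map_one, Matrix.det_one, one_mul]

theorem charpoly_roots_eigenvalues {N : ℕ} (B : Matrix (Fin N) (Fin N) ℝ)
    (hB : B.IsHermitian) :
    B.charpoly.roots = Multiset.map hB.eigenvalues Finset.univ.val := by
  have hsp := hB.spectral_theorem
  have hch : B.charpoly = (Matrix.diagonal (RCLike.ofReal ∘ hB.eigenvalues)).charpoly := by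
    conv_lhs => rw [hsp]
    exact charpoly_unitary_conj _ (hB.eigenvectorUnitary).2 _
  have hdiag : (Matrix.diagonal (RCLike.ofReal ∘ hB.eigenvalues)).charpoly
      = (Multiset.map (fun a => X - C a) (Multiset.map hB.eigenvalues Finset.univ.val)).prod := by
    unfold Matrix.charpoly Matrix.charmatrix
    have : Matrix.scalar (Fin N) (X : Polynomial ℝ) -
        C.mapMatrix (Matrix.diagonal (RCLike.ofReal ∘ hB.eigenvalues)) =
        Matrix.diagonal (fun i => X - C (hB.eigenvalues i)) := by
      ext j l
      by_cases h : j = l <;>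
        simp [Matrix.scalar, Matrix.diagonal, h, Matrix.one_apply, RCLike.ofReal]
    rw [this, Matrix.det_diagonal, Multiset.map_map]
    rfl
  rw [hch, hdiag, Polynomial.roots_multiset_prod_X_sub_C]

theorem antitone_unique {N : ℕ} (f g : Fin N → ℝ) (hf : Antitone f) (hg : Antitone g)
    (h : Multiset.map f Finset.univ.val = Multiset.map g Finset.univ.val) : f = g := by
  have hf' : (List.ofFn f).Pairwise (· ≥ ·) :=
    List.pairwise_ofFn.mpr (fun a b hab => hf hab.le)
  have hg' : (List.ofFn g).Pairwise (· ≥ ·) :=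
    List.pairwise_ofFn.mpr (fun a b hab => hg hab.le)
  rw [Fin.univ_val_map, Fin.univ_val_map] at h
  have hperm : List.Perm (List.ofFn f) (List.ofFn g) := Quotient.exact h
  exact List.ofFn_injective (List.Perm.eq_of_pairwise' hf' hg' hperm)

theorem exists_sorted_eigenbasis {N : ℕ} (B : Matrix (Fin N) (Fin N) ℝ)
    (hB : B.IsHermitian) (μ : Fin N → ℝ) (hmono : Antitone μ)
    (hμ : B.charpoly.roots = Multiset.map μ Finset.univ.val) :
    ∃ v : OrthonormalBasis (Fin N) ℝ (EuclideanSpace ℝ (Fin N)),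
      ∀ j, B *ᵥ ⇑(v j) = μ j • ⇑(v j) := by
  obtain ⟨σ, hσ⟩ : ∃ σ : Equiv.Perm (Fin N), Antitone (hB.eigenvalues ∘ σ) := by
    refine ⟨(Fin.revPerm).trans (Tuple.sort hB.eigenvalues), ?_⟩
    intro a b hab
    exact Tuple.monotone_sort hB.eigenvalues (Fin.rev_le_rev.mpr hab)
  have hmap : Multiset.map (hB.eigenvalues ∘ σ) Finset.univ.val
      = Multiset.map μ Finset.univ.val := by
    rw [← hμ, charpoly_roots_eigenvalues B hB, ← Multiset.map_map]
    congr 1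
    have : Multiset.map (⇑σ) Finset.univ.val = Finset.univ.val := by
      have := congrArg Finset.val (Finset.map_univ_equiv σ)
      simpa [Finset.map_val] using this
    rw [this]
  have : hB.eigenvalues ∘ σ = μ := antitone_unique _ _ hσ hmono hmap
  refine ⟨hB.eigenvectorBasis.reindex σ.symm, fun j => ?_⟩
  rw [OrthonormalBasis.reindex_apply, Equiv.symm_symm, ← this]
  exact hB.mulVec_eigenvectorBasis (σ j)

theorem inner_eq_dot {N : ℕ} (x y : EuclideanSpace ℝ (Fin N)) :
    (inner ℝ x y : ℝ) = ⇑x ⬝ᵥ ⇑y := by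
  simp [PiLp.inner_apply, dotProduct, mul_comm]

theorem finrank_span_onb {N : ℕ} (v : OrthonormalBasis (Fin N) ℝ (EuclideanSpace ℝ (Fin N)))
    (S : Finset (Fin N)) :
    Module.finrank ℝ (Submodule.span ℝ (v '' ↑S)) = S.card := by
  have li := (v.orthonormal.comp ((↑) : {x // x ∈ S} → Fin N) Subtype.coe_injective
    ).linearIndependent
  have := finrank_span_eq_card li
  have h2 : Set.range (⇑v ∘ (Subtype.val : {x // x ∈ S} → Fin N)) = v '' ↑S := by
    rw [Set.range_comp]
    congr 1
    ext z
    simp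
  rw [h2] at this
  rw [this, Fintype.card_coe]

theorem exists_ne_zero_mem_inf {N : ℕ} (W U : Submodule ℝ (EuclideanSpace ℝ (Fin N)))
    (h : N < Module.finrank ℝ W + Module.finrank ℝ U) : ∃ x, x ≠ 0 ∧ x ∈ W ⊓ U := by
  have heq := Submodule.finrank_sup_add_finrank_inf_eq W U
  have hsup : Module.finrank ℝ ↥(W ⊔ U) ≤ N := by
    have := Submodule.finrank_le (W ⊔ U)
    simpa using this
  have hpos : 0 < Module.finrank ℝ ↥(W ⊓ U) := by omega
  rw [Module.finrank_pos_iff] at hpos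
  obtain ⟨x, hx⟩ := exists_ne (0 : ↥(W ⊓ U))
  exact ⟨x.1, by simpa using hx, x.2⟩

noncomputable def emb {n : ℕ} (i : Fin (n + 1)) :
    EuclideanSpace ℝ (Fin n) →ₗ[ℝ] EuclideanSpace ℝ (Fin (n + 1)) where
  toFun x := (WithLp.equiv 2 _).symm (i.insertNth 0 ⇑x)
  map_add' x y := by
    ext j
    refine Fin.succAboveCases i ?_ (fun m => ?_) j <;>
      simp [Fin.insertNth_apply_same, Fin.insertNth_apply_succAbove]
  map_smul' c x := by
    ext j
    refine Fin.succAboveCases i ?_ (fun m => ?_) j <;>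
      simp [Fin.insertNth_apply_same, Fin.insertNth_apply_succAbove]

theorem emb_inj {n : ℕ} (i : Fin (n + 1)) : Function.Injective (emb i) := by
  intro x y h
  ext m
  have := congrArg (fun z : EuclideanSpace ℝ (Fin (n+1)) => z (i.succAbove m)) h
  simpa [emb, Fin.insertNth_apply_succAbove] using this

theorem emb_dot {n : ℕ} (i : Fin (n + 1)) (x : EuclideanSpace ℝ (Fin n)) (w : Fin (n+1) → ℝ) :
    ⇑(emb i x) ⬝ᵥ w = ∑ m, x m * w (i.succAbove m) := by
  rw [dotProduct, Fin.sum_univ_succAbove _ i]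
  simp [emb, Fin.insertNth_apply_same, Fin.insertNth_apply_succAbove]

theorem emb_dot_self {n : ℕ} (i : Fin (n + 1)) (x : EuclideanSpace ℝ (Fin n)) :
    ⇑(emb i x) ⬝ᵥ ⇑(emb i x) = ⇑x ⬝ᵥ ⇑x := by
  rw [emb_dot]
  simp [emb, Fin.insertNth_apply_succAbove, dotProduct]

theorem emb_quadform {n : ℕ} (A : Matrix (Fin (n+1)) (Fin (n+1)) ℝ) (i : Fin (n + 1))
    (x : EuclideanSpace ℝ (Fin n)) :
    ⇑(emb i x) ⬝ᵥ (A *ᵥ ⇑(emb i x)) =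
      ⇑x ⬝ᵥ ((A.submatrix i.succAbove i.succAbove) *ᵥ ⇑x) := by
  rw [emb_dot]
  refine Finset.sum_congr rfl fun m _ => ?_
  congr 1
  rw [Matrix.mulVec, dotProduct, Fin.sum_univ_succAbove _ i]
  simp [emb, Fin.insertNth_apply_same, Fin.insertNth_apply_succAbove, Matrix.mulVec,
    dotProduct, Matrix.submatrix]
theorem inner_onb_expansion {N : ℕ} (v : OrthonormalBasis (Fin N) ℝ (EuclideanSpace ℝ (Fin N)))
    (x y : EuclideanSpace ℝ (Fin N)) :
    (inner ℝ x y : ℝ) = ∑ j, (inner ℝ (v j) x : ℝ) * (inner ℝ (v j) y : ℝ) := by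
  rw [← v.repr.inner_map_map x y, PiLp.inner_apply]
  simp_rw [← v.repr_apply_apply]
  simp [mul_comm]
theorem quadform_eq {N : ℕ} (B : Matrix (Fin N) (Fin N) ℝ) (hB : B.IsSymm)
    (μ : Fin N → ℝ) (v : OrthonormalBasis (Fin N) ℝ (EuclideanSpace ℝ (Fin N)))
    (hv : ∀ j, B *ᵥ ⇑(v j) = μ j • ⇑(v j)) (x : EuclideanSpace ℝ (Fin N)) :
    ⇑x ⬝ᵥ (B *ᵥ ⇑x) = ∑ j, μ j * (inner ℝ (v j) x : ℝ)^2 := by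
  set y : EuclideanSpace ℝ (Fin N) := (WithLp.equiv 2 _).symm (B *ᵥ ⇑x) with hy
  have hyc : ⇑y = B *ᵥ ⇑x := rfl
  have h1 : ⇑x ⬝ᵥ (B *ᵥ ⇑x) = (inner ℝ x y : ℝ) := by rw [inner_eq_dot, hyc]
  have h2 : ∀ j, (inner ℝ (v j) y : ℝ) = μ j * (inner ℝ (v j) x : ℝ) := by
    intro j
    rw [inner_eq_dot, hyc, Matrix.dotProduct_mulVec, ← Matrix.mulVec_transpose, hB.eq, hv j,
      inner_eq_dot]
    simp only [dotProduct, Matrix.smul_mulVec]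
    rw [Finset.mul_sum]
    exact Finset.sum_congr rfl fun l _ => by
      simp only [Pi.smul_apply, smul_eq_mul]; ring
  rw [h1, inner_onb_expansion v x y]
  refine Finset.sum_congr rfl fun j _ => ?_
  rw [h2 j]; ring
theorem inner_span_zero {N : ℕ} (v : OrthonormalBasis (Fin N) ℝ (EuclideanSpace ℝ (Fin N)))
    (S : Finset (Fin N)) (x : EuclideanSpace ℝ (Fin N))
    (hx : x ∈ Submodule.span ℝ (v '' ↑S)) {j : Fin N} (hj : j ∉ S) :
    (inner ℝ (v j) x : ℝ) = 0 := by
  induction hx using Submodule.span_induction with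
  | mem z hz =>
      obtain ⟨l, hl, rfl⟩ := hz
      have : j ≠ l := fun h => hj (h ▸ hl)
      exact v.orthonormal.2 this
  | zero => simp
  | add a b _ _ ha hb => rw [inner_add_right, ha, hb, add_zero]
  | smul c a _ ha => rw [real_inner_smul_right, ha, mul_zero]

theorem dot_self_eq {N : ℕ} (v : OrthonormalBasis (Fin N) ℝ (EuclideanSpace ℝ (Fin N)))
    (x : EuclideanSpace ℝ (Fin N)) : ⇑x ⬝ᵥ ⇑x = ∑ j, (inner ℝ (v j) x : ℝ)^2 := by
  rw [← inner_eq_dot x x, inner_onb_expansion v x x]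
  exact Finset.sum_congr rfl fun j _ => (sq _).symm

theorem quadform_ge {N : ℕ} (B : Matrix (Fin N) (Fin N) ℝ) (hB : B.IsSymm)
    (μ : Fin N → ℝ) (v : OrthonormalBasis (Fin N) ℝ (EuclideanSpace ℝ (Fin N)))
    (hv : ∀ j, B *ᵥ ⇑(v j) = μ j • ⇑(v j)) (S : Finset (Fin N)) (c : ℝ)
    (hc : ∀ j ∈ S, c ≤ μ j) (x : EuclideanSpace ℝ (Fin N))
    (hx : x ∈ Submodule.span ℝ (v '' ↑S)) :
    c * (⇑x ⬝ᵥ ⇑x) ≤ ⇑x ⬝ᵥ (B *ᵥ ⇑x) := by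
  rw [quadform_eq B hB μ v hv x, dot_self_eq v x, Finset.mul_sum]
  refine Finset.sum_le_sum fun j _ => ?_
  by_cases h : j ∈ S
  · exact mul_le_mul_of_nonneg_right (hc j h) (sq_nonneg _)
  · rw [inner_span_zero v S x hx h]; simp

theorem quadform_le {N : ℕ} (B : Matrix (Fin N) (Fin N) ℝ) (hB : B.IsSymm)
    (μ : Fin N → ℝ) (v : OrthonormalBasis (Fin N) ℝ (EuclideanSpace ℝ (Fin N)))
    (hv : ∀ j, B *ᵥ ⇑(v j) = μ j • ⇑(v j)) (S : Finset (Fin N)) (c : ℝ)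
    (hc : ∀ j ∈ S, μ j ≤ c) (x : EuclideanSpace ℝ (Fin N))
    (hx : x ∈ Submodule.span ℝ (v '' ↑S)) :
    ⇑x ⬝ᵥ (B *ᵥ ⇑x) ≤ c * (⇑x ⬝ᵥ ⇑x) := by
  rw [quadform_eq B hB μ v hv x, dot_self_eq v x, Finset.mul_sum]
  refine Finset.sum_le_sum fun j _ => ?_
  by_cases h : j ∈ S
  · exact mul_le_mul_of_nonneg_right (hc j h) (sq_nonneg _)
  · rw [inner_span_zero v S x hx h]; simp

theorem interlace_aux {n : ℕ}
    (A : Matrix (Fin (n + 1)) (Fin (n + 1)) ℝ) (hA : A.IsSymm)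
    (i : Fin (n + 1)) (A' : Matrix (Fin n) (Fin n) ℝ)
    (hA' : A' = A.submatrix i.succAbove i.succAbove)
    (μ : Fin (n + 1) → ℝ) (v : OrthonormalBasis (Fin (n+1)) ℝ (EuclideanSpace ℝ (Fin (n+1))))
    (hv : ∀ j, A *ᵥ ⇑(v j) = μ j • ⇑(v j))
    (μ' : Fin n → ℝ) (v' : OrthonormalBasis (Fin n) ℝ (EuclideanSpace ℝ (Fin n)))
    (hv' : ∀ j, A' *ᵥ ⇑(v' j) = μ' j • ⇑(v' j))
    (S : Finset (Fin n)) (T : Finset (Fin (n + 1)))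
    (hcard : n + 1 < S.card + T.card) (c c' : ℝ)
    (hS : ∀ j ∈ S, c' ≤ μ' j) (hT : ∀ j ∈ T, μ j ≤ c) : c' ≤ c := by
  have hA'symm : A'.IsSymm := by
    rw [hA', Matrix.IsSymm, Matrix.transpose_submatrix, hA.eq]
  set W := (Submodule.span ℝ (v' '' ↑S)).map (emb i) with hW
  set U := Submodule.span ℝ (v '' ↑T) with hU
  have hWrank : Module.finrank ℝ W = S.card := by
    rw [← (Submodule.equivMapOfInjective (emb i) (emb_inj i) _).finrank_eq]
    exact finrank_span_onb v' S
  have hUrank : Module.finrank ℝ U = T.card := finrank_span_onb v T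
  obtain ⟨x, hx0, hxW, hxU⟩ : ∃ x, x ≠ 0 ∧ x ∈ W ⊓ U := by
    apply exists_ne_zero_mem_inf
    rw [hWrank, hUrank]; exact hcard
  obtain ⟨y, hy, hxy⟩ := Submodule.mem_map.mp hxW
  have hypos : (0:ℝ) < ⇑x ⬝ᵥ ⇑x := by
    have hnx : 0 < ‖x‖ := norm_pos_iff.mpr hx0
    rw [← inner_eq_dot, real_inner_self_eq_norm_sq]
    positivity
  have hxx : ⇑x ⬝ᵥ ⇑x = ⇑y ⬝ᵥ ⇑y := by rw [← hxy, emb_dot_self]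
  have hquad : ⇑x ⬝ᵥ (A *ᵥ ⇑x) = ⇑y ⬝ᵥ (A' *ᵥ ⇑y) := by
    rw [← hxy, emb_quadform, ← hA']
  have h1 : c' * (⇑x ⬝ᵥ ⇑x) ≤ ⇑x ⬝ᵥ (A *ᵥ ⇑x) := by
    rw [hxx, hquad]
    exact quadform_ge A' hA'symm μ' v' hv' S c' hS y hy
  have h2 : ⇑x ⬝ᵥ (A *ᵥ ⇑x) ≤ c * (⇑x ⬝ᵥ ⇑x) :=
    quadform_le A hA μ v hv T c hT x hxU
  exact le_of_mul_le_mul_right (h1.trans h2) hypos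

theorem interlace_aux' {n : ℕ}
    (A : Matrix (Fin (n + 1)) (Fin (n + 1)) ℝ) (hA : A.IsSymm)
    (i : Fin (n + 1)) (A' : Matrix (Fin n) (Fin n) ℝ)
    (hA' : A' = A.submatrix i.succAbove i.succAbove)
    (μ : Fin (n + 1) → ℝ) (v : OrthonormalBasis (Fin (n+1)) ℝ (EuclideanSpace ℝ (Fin (n+1))))
    (hv : ∀ j, A *ᵥ ⇑(v j) = μ j • ⇑(v j))
    (μ' : Fin n → ℝ) (v' : OrthonormalBasis (Fin n) ℝ (EuclideanSpace ℝ (Fin n)))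
    (hv' : ∀ j, A' *ᵥ ⇑(v' j) = μ' j • ⇑(v' j))
    (S : Finset (Fin n)) (T : Finset (Fin (n + 1)))
    (hcard : n + 1 < S.card + T.card) (c c' : ℝ)
    (hS : ∀ j ∈ S, μ' j ≤ c') (hT : ∀ j ∈ T, c ≤ μ j) : c ≤ c' := by
  have := interlace_aux (-A) (by rw [Matrix.IsSymm, Matrix.transpose_neg, hA.eq])
    i (-A') (by rw [hA']; ext a b; simp)
    (fun j => -μ j) v (fun j => by rw [Matrix.neg_mulVec, hv j, ← neg_smul])
    (fun j => -μ' j) v' (fun j => by rw [Matrix.neg_mulVec, hv' j, ← neg_smul])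
    S T hcard (-c) (-c')
    (fun j hj => neg_le_neg (hS j hj)) (fun j hj => neg_le_neg (hT j hj))
  linarith

/-- **Cauchy interlacing theorem.** Let `A` be an `(n+1) × (n+1)` real symmetric matrix
(with `n + 1 ≥ 2`), and let `A'` be the `n × n` matrix obtained from `A` by deleting its
`i`-th row and `i`-th column. If `μ : Fin (n+1) → ℝ` enumerates the eigenvalues of `A`
in nonincreasing order (with multiplicity, i.e. it enumerates the roots of the
characteristic polynomial) and `μ' : Fin n → ℝ` does the same for `A'`, then
`μ k ≥ μ' k ≥ μ (k+1)` for every `k`. -/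
theorem cauchy_interlacing
    (n : ℕ) (hn : 1 ≤ n)
    (A : Matrix (Fin (n + 1)) (Fin (n + 1)) ℝ) (hA : A.IsSymm)
    (i : Fin (n + 1))
    (A' : Matrix (Fin n) (Fin n) ℝ)
    (hA' : A' = A.submatrix i.succAbove i.succAbove)
    (μ : Fin (n + 1) → ℝ) (hμmono : Antitone μ)
    (hμ : A.charpoly.roots = Multiset.map μ Finset.univ.val)
    (μ' : Fin n → ℝ) (hμ'mono : Antitone μ')
    (hμ' : A'.charpoly.roots = Multiset.map μ' Finset.univ.val) :
    ∀ k : Fin n, μ k.castSucc ≥ μ' k ∧ μ' k ≥ μ k.succ := by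
  have hAh : A.IsHermitian := by
    show Aᴴ = A
    rw [Matrix.conjTranspose_eq_transpose_of_trivial]; exact hA
  have hA's : A'.IsSymm := by rw [hA', Matrix.IsSymm, Matrix.transpose_submatrix, hA.eq]
  have hA'h : A'.IsHermitian := by
    show A'ᴴ = A'
    rw [Matrix.conjTranspose_eq_transpose_of_trivial]; exact hA's
  obtain ⟨v, hv⟩ := exists_sorted_eigenbasis A hAh μ hμmono hμ
  obtain ⟨v', hv'⟩ := exists_sorted_eigenbasis A' hA'h μ' hμ'mono hμ'
  intro k
  constructor
  · refine interlace_aux A hA i A' hA' μ v hv μ' v' hv' (Finset.Iic k)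
      (Finset.Ici k.castSucc) ?_ (μ k.castSucc) (μ' k) ?_ ?_
    · rw [Fin.card_Iic, Fin.card_Ici, Fin.coe_castSucc]
      have := k.isLt; omega
    · exact fun j hj => hμ'mono (Finset.mem_Iic.mp hj)
    · exact fun j hj => hμmono (Finset.mem_Ici.mp hj)
  · refine interlace_aux' A hA i A' hA' μ v hv μ' v' hv' (Finset.Ici k)
      (Finset.Iic k.succ) ?_ (μ k.succ) (μ' k) ?_ ?_
    · rw [Fin.card_Ici, Fin.card_Iic, Fin.val_succ]
      have := k.isLt; omega
    · exact fun j hj => hμ'mono (Finset.mem_Ici.mp hj)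
    · exact fun j hj => hμmono (Finset.mem_Iic.mp hj)
end

section
/- Let A be an n×n real symmetric matrix, V = {1, …, n}, and S ⊆ V a nonempty subset. Then the principal submatrix A(S) is positive definite if and only if there exists α > 0 such that the matrix A + α·D(V∖S) is positive definite. -/
open Matrix

/-- Adding a large positive multiple of the identity to a real symmetric matrix
makes it positive definite. -/
lemma exists_shift_posDef {m : Type*} [Fintype m] [DecidableEq m]
    (M : Matrix m m ℝ) (hM : M.IsHermitian) :
    ∃ α : ℝ, 0 < α ∧ (M + α • (1 : Matrix m m ℝ)).PosDef := by
  classical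
  set c : ℝ := ∑ i, ∑ j, |M i j| with hc
  have hc0 : 0 ≤ c := Finset.sum_nonneg fun i _ => Finset.sum_nonneg fun j _ => abs_nonneg _
  refine ⟨c + 1, by linarith, posDef_iff_dotProduct_mulVec.mpr ⟨?_, ?_⟩⟩
  · have h1 : ((c + 1) • (1 : Matrix m m ℝ)).IsHermitian := by
      simp [Matrix.IsHermitian, conjTranspose_eq_transpose_of_trivial]
    exact hM.add h1
  · intro x hx
    have hxx0 : 0 ≤ x ⬝ᵥ x := Finset.sum_nonneg fun i _ => mul_self_nonneg _
    have hxx : 0 < x ⬝ᵥ x := by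
      rcases hxx0.eq_or_lt with h | h
      · exact absurd (dotProduct_self_eq_zero.mp h.symm) hx
      · exact h
    have hrow : ∀ i, ∑ j, |M i j| ≤ c :=
      fun i => Finset.single_le_sum (f := fun i => ∑ j, |M i j|)
        (fun i _ => Finset.sum_nonneg fun j _ => abs_nonneg _) (Finset.mem_univ i)
    have hcol : ∀ j, ∑ i, |M i j| ≤ c := by
      intro j
      calc ∑ i, |M i j| ≤ ∑ i, ∑ j', |M i j'| :=
            Finset.sum_le_sum fun i _ =>
              Finset.single_le_sum (f := fun j' => |M i j'|)
                (fun j' _ => abs_nonneg _) (Finset.mem_univ j)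
        _ = c := rfl
    have sum_eq : x ⬝ᵥ (M *ᵥ x) = ∑ i, ∑ j, x i * (M i j * x j) := by
      simp [dotProduct, mulVec, Finset.mul_sum]
    have T1 : ∑ i, ∑ j, |M i j| * x i ^ 2 ≤ c * (x ⬝ᵥ x) := by
      calc ∑ i, ∑ j, |M i j| * x i ^ 2 = ∑ i, (∑ j, |M i j|) * x i ^ 2 := by
            simp [Finset.sum_mul]
        _ ≤ ∑ i, c * x i ^ 2 :=
            Finset.sum_le_sum fun i _ => mul_le_mul_of_nonneg_right (hrow i) (sq_nonneg _)
        _ = c * (x ⬝ᵥ x) := by simp [dotProduct, Finset.mul_sum, sq]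
    have T2 : ∑ i, ∑ j, |M i j| * x j ^ 2 ≤ c * (x ⬝ᵥ x) := by
      rw [Finset.sum_comm]
      calc ∑ j, ∑ i, |M i j| * x j ^ 2 = ∑ j, (∑ i, |M i j|) * x j ^ 2 := by
            simp [Finset.sum_mul]
        _ ≤ ∑ j, c * x j ^ 2 :=
            Finset.sum_le_sum fun j _ => mul_le_mul_of_nonneg_right (hcol j) (sq_nonneg _)
        _ = c * (x ⬝ᵥ x) := by simp [dotProduct, Finset.mul_sum, sq]
    have step1 : ∀ i j, -(|M i j| * (x i ^ 2 + x j ^ 2) / 2) ≤ x i * (M i j * x j) := by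
      intro i j
      have h1 : 0 ≤ (|M i j| + M i j) * (x i + x j) ^ 2 :=
        mul_nonneg (by linarith [neg_abs_le (M i j)]) (sq_nonneg _)
      have h2 : 0 ≤ (|M i j| - M i j) * (x i - x j) ^ 2 :=
        mul_nonneg (by linarith [le_abs_self (M i j)]) (sq_nonneg _)
      nlinarith [h1, h2]
    have hb : -(c * (x ⬝ᵥ x)) - c * (x ⬝ᵥ x) ≤ 2 * (x ⬝ᵥ (M *ᵥ x)) := by
      have hlow : ∑ i, ∑ j, -(|M i j| * (x i ^ 2 + x j ^ 2) / 2) ≤ x ⬝ᵥ (M *ᵥ x) := by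
        rw [sum_eq]
        exact Finset.sum_le_sum fun i _ => Finset.sum_le_sum fun j _ => step1 i j
      have hexp : ∑ i, ∑ j, -(|M i j| * (x i ^ 2 + x j ^ 2) / 2)
          = -((∑ i, ∑ j, |M i j| * x i ^ 2) / 2 + (∑ i, ∑ j, |M i j| * x j ^ 2) / 2) := by
        simp only [mul_add, add_div, neg_add, Finset.sum_add_distrib,
          Finset.sum_neg_distrib, Finset.sum_div]
      rw [hexp] at hlow
      linarith [T1, T2, hlow]
    have key : (star x) ⬝ᵥ ((M + (c + 1) • (1 : Matrix m m ℝ)) *ᵥ x)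
        = x ⬝ᵥ (M *ᵥ x) + (c + 1) * (x ⬝ᵥ x) := by
      simp [star_trivial, add_mulVec, dotProduct_add, smul_mulVec, one_mulVec,
        dotProduct_smul, smul_eq_mul]
    rw [key]
    nlinarith [hb, hxx]


lemma posDef_submatrix_equiv {l m : Type*} [Fintype l] [Fintype m]
    {M : Matrix m m ℝ} (hM : M.PosDef) (e : l ≃ m) :
    (M.submatrix e e).PosDef := by
  refine posDef_iff_dotProduct_mulVec.mpr ⟨hM.1.submatrix _, fun x hx => ?_⟩
  have hx' : x ∘ e.symm ≠ 0 := by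
    intro h
    apply hx
    funext i
    have := congrFun h (e i)
    simpa using this
  have hpos := (posDef_iff_dotProduct_mulVec.mp hM).2 hx'
  rw [Matrix.submatrix_mulVec_equiv]
  have heq : (star x) ⬝ᵥ ((M *ᵥ (x ∘ e.symm)) ∘ e)
      = star (x ∘ e.symm) ⬝ᵥ (M *ᵥ (x ∘ e.symm)) := by
    simp only [dotProduct, star_trivial, Function.comp_apply]
    exact Fintype.sum_equiv e _ _ (fun i => by simp)
  rw [heq]
  exact hpos

lemma posDef_submatrix_subtype {n : ℕ} {M : Matrix (Fin n) (Fin n) ℝ} (hM : M.PosDef)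
    (S : Finset (Fin n)) :
    (M.submatrix (Subtype.val : {i // i ∈ S} → Fin n) Subtype.val).PosDef := by
  classical
  refine posDef_iff_dotProduct_mulVec.mpr ⟨hM.1.submatrix _, fun x hx => ?_⟩
  set y : Fin n → ℝ := fun j => if h : j ∈ S then x ⟨j, h⟩ else 0 with hy
  have hsum : ∀ g : Fin n → ℝ, ∑ j, y j * g j = ∑ j : {i // i ∈ S}, x j * g j.val := by
    intro g
    calc ∑ j, y j * g j = ∑ j ∈ S, y j * g j :=
          (Finset.sum_subset S.subset_univ (fun j _ hj => by simp [hy, hj])).symm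
      _ = ∑ j : {i // i ∈ S}, y j.val * g j.val := (Finset.sum_coe_sort S _).symm
      _ = ∑ j : {i // i ∈ S}, x j * g j.val := by
          refine Finset.sum_congr rfl fun j _ => ?_
          simp [hy, j.2]
  have hsum2 : ∀ g : Fin n → ℝ, ∑ k, g k * y k = ∑ k : {i // i ∈ S}, g k.val * x k := by
    intro g
    calc ∑ k, g k * y k = ∑ k, y k * g k := by simp [mul_comm]
      _ = ∑ k : {i // i ∈ S}, x k * g k.val := hsum g
      _ = ∑ k : {i // i ∈ S}, g k.val * x k := by simp [mul_comm]
  have hy0 : y ≠ 0 := by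
    intro h0
    apply hx
    funext j
    have := congrFun h0 j.val
    simpa [hy, j.2] using this
  have hq : (star x) ⬝ᵥ ((M.submatrix (Subtype.val : {i // i ∈ S} → Fin n) Subtype.val) *ᵥ x)
      = (star y) ⬝ᵥ (M *ᵥ y) := by
    simp only [dotProduct, mulVec, star_trivial, submatrix_apply]
    rw [hsum (fun j => ∑ k, M j k * y k)]
    refine Finset.sum_congr rfl fun j _ => ?_
    congr 1
    rw [hsum2 (fun k => M j.val k)]
  rw [hq]
  exact (posDef_iff_dotProduct_mulVec.mp hM).2 hy0


/-- Let `A` be an `n × n` real symmetric matrix, `V = {1, …, n}`, and `S ⊆ V` nonempty.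
Then the principal submatrix `A(S)` is positive definite iff there exists `α > 0` such that
`A + α • D(V \ S)` is positive definite, where `D(R)` is the diagonal 0/1 matrix with ones
exactly at the indices in `R`. -/
theorem submatrix_posDef_iff_exists_shift
    (n : ℕ) (A : Matrix (Fin n) (Fin n) ℝ) (hA : A.IsSymm)
    (S : Finset (Fin n)) (hS : S.Nonempty) :
    (A.submatrix (Subtype.val : {i // i ∈ S} → Fin n)
        (Subtype.val : {i // i ∈ S} → Fin n)).PosDef ↔
      ∃ α : ℝ, 0 < α ∧
        (A + α • Matrix.diagonal (fun i => if i ∈ Sᶜ then (1 : ℝ) else 0)).PosDef := by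
  classical
  constructor
  · intro h11
    have hHerm : A.IsHermitian := by
      rw [Matrix.IsHermitian, conjTranspose_eq_transpose_of_trivial]
      exact hA
    set A11 : Matrix {i // i ∈ S} {i // i ∈ S} ℝ :=
      A.submatrix Subtype.val Subtype.val with hA11
    set B : Matrix {i // i ∈ S} {i // ¬ i ∈ S} ℝ :=
      A.submatrix Subtype.val Subtype.val with hB
    set A22 : Matrix {i // ¬ i ∈ S} {i // ¬ i ∈ S} ℝ :=
      A.submatrix Subtype.val Subtype.val with hA22
    haveI : Invertible A11 := h11.isUnit.invertible
    have hM0 : (A22 - Bᴴ * A11⁻¹ * B).IsHermitian :=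
      (hHerm.submatrix _).sub (isHermitian_conjTranspose_mul_mul B h11.1.inv)
    obtain ⟨α, hα, hshift⟩ := exists_shift_posDef _ hM0
    refine ⟨α, hα, ?_⟩
    have hScomp : A22 + α • (1 : Matrix {i // ¬ i ∈ S} {i // ¬ i ∈ S} ℝ) - Bᴴ * A11⁻¹ * B
        = (A22 - Bᴴ * A11⁻¹ * B) + α • 1 := add_sub_right_comm _ _ _
    have hFB : (fromBlocks A11 B Bᴴ (A22 + α • 1)).PosDef := by
      refine posDef_iff_dotProduct_mulVec.mpr ⟨?_, ?_⟩
      · rw [Matrix.IsHermitian.fromBlocks₁₁ B _ h11.1, hScomp]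
        exact hshift.1
      · intro z hz
        have hzd : z = (z ∘ Sum.inl) ⊕ᵥ (z ∘ Sum.inr) := (Sum.elim_comp_inl_inr z).symm
        set xx := z ∘ Sum.inl with hxx'
        set yy := z ∘ Sum.inr with hyy'
        have key := schur_complement_eq₁₁ (B := B) (D := A22 + α • 1) xx yy h11.1
        simp only [star_trivial] at key ⊢
        rw [hzd, dotProduct_mulVec, key]
        set w := xx + (A11⁻¹ * B) *ᵥ yy with hw
        have ht1 : 0 ≤ w ᵥ* A11 ⬝ᵥ w := by
          rw [← dotProduct_mulVec]
          simpa only [star_trivial] using h11.posSemidef.dotProduct_mulVec_nonneg w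
        by_cases hyy : yy = 0
        · have hxx : xx ≠ 0 := by
            intro h
            apply hz
            rw [hzd, h, hyy]
            funext i
            cases i <;> rfl
          have hw0 : w = xx := by rw [hw, hyy, mulVec_zero, add_zero]
          have ht1' : 0 < w ᵥ* A11 ⬝ᵥ w := by
            rw [hw0, ← dotProduct_mulVec]
            simpa only [star_trivial] using h11.dotProduct_mulVec_pos hxx
          have ht2 : yy ᵥ* (A22 + α • 1 - Bᴴ * A11⁻¹ * B) ⬝ᵥ yy = 0 := by
            rw [hyy]
            simp
          linarith
        · have ht2 : 0 < yy ᵥ* (A22 + α • 1 - Bᴴ * A11⁻¹ * B) ⬝ᵥ yy := by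
            rw [hScomp, ← dotProduct_mulVec]
            simpa only [star_trivial] using hshift.dotProduct_mulVec_pos hyy
          linarith
    set e : {i // i ∈ S} ⊕ {i // ¬ i ∈ S} ≃ Fin n := Equiv.sumCompl (· ∈ S) with he
    set D : Matrix (Fin n) (Fin n) ℝ :=
      Matrix.diagonal (fun i => if i ∈ Sᶜ then (1 : ℝ) else 0) with hD
    have hsymm : ∀ a b, A a b = A b a := fun a b => hA.apply b a
    have hblocks : (A + α • D).submatrix e e = fromBlocks A11 B Bᴴ (A22 + α • 1) := by
      ext i j
      have hDapply : ∀ a b : Fin n, D a b = if a = b then (if a ∈ Sᶜ then (1:ℝ) else 0) else 0 := by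
        intro a b
        rw [hD, Matrix.diagonal]
        rfl
      cases i with
      | inl i =>
        cases j with
        | inl j =>
          have hd : D (i : Fin n) (j : Fin n) = 0 := by
            rw [hDapply]
            rcases eq_or_ne ((i : Fin n)) ((j : Fin n)) with h | h
            · simp [h, Finset.mem_compl, j.2]
            · simp [h]
          simp [he, hd, hA11]
        | inr j =>
          have hne : (i : Fin n) ≠ (j : Fin n) := fun h => j.2 (h ▸ i.2)
          have hd : D (i : Fin n) (j : Fin n) = 0 := by
            rw [hDapply]
            simp [hne]
          simp [he, hd, hB]
      | inr i =>
        cases j with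
        | inl j =>
          have hne : (i : Fin n) ≠ (j : Fin n) := fun h => i.2 (h ▸ j.2)
          have hd : D (i : Fin n) (j : Fin n) = 0 := by
            rw [hDapply]
            simp [hne]
          simp [he, hd, hB, hsymm (i : Fin n) (j : Fin n)]
        | inr j =>
          rcases eq_or_ne i j with h | h
          · subst h
            have hd : D (i : Fin n) (i : Fin n) = 1 := by
              rw [hDapply]
              simp [Finset.mem_compl, i.2]
            simp [he, hd, hA22, Matrix.one_apply]
          · have hvne : (i : Fin n) ≠ (j : Fin n) := fun hh => h (Subtype.ext hh)
            have hd : D (i : Fin n) (j : Fin n) = 0 := by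
              rw [hDapply]
              simp [hvne]
            simp [he, hd, hA22, Matrix.one_apply, h]
    have hPD : ((A + α • D).submatrix e e).PosDef := hblocks ▸ hFB
    have hback : (A + α • D) = ((A + α • D).submatrix e e).submatrix e.symm e.symm := by
      ext i j
      simp
    rw [hD] at hback
    rw [hback]
    exact posDef_submatrix_equiv hPD e.symm
  · rintro ⟨α, hα, hPD⟩
    have h := posDef_submatrix_subtype hPD S
    have heq : ((A + α • Matrix.diagonal (fun i => if i ∈ Sᶜ then (1 : ℝ) else 0)).submatrix
        (Subtype.val : {i // i ∈ S} → Fin n) (Subtype.val : {i // i ∈ S} → Fin n))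
        = A.submatrix (Subtype.val : {i // i ∈ S} → Fin n)
            (Subtype.val : {i // i ∈ S} → Fin n) := by
      ext i j
      simp only [submatrix_apply, Matrix.add_apply, Matrix.smul_apply, smul_eq_mul]
      rcases eq_or_ne ((i : Fin n)) ((j : Fin n)) with hij | hij
      · rw [hij, Matrix.diagonal_apply_eq]
        simp [Finset.mem_compl, j.2]
      · rw [Matrix.diagonal_apply_ne _ hij]
        ring
    rw [← heq]
    exact h
end

section
/- Let A be an n×n real symmetric matrix, α ≥ 0, and let γ be the standard Gaussian measure on ℝⁿ. Define the set function Q(S) = ∫_{ℝⁿ} min{ wᵀ(A + α·D(S))w, 0 } dγ(w) for S ⊆ {1, …, n}. Then Q is monotone nondecreasing (S ⊆ T implies Q(S) ≤ Q(T)) and submodular: Q(S) + Q(T) ≥ Q(S ∪ T) + Q(S ∩ T) for all S, T ⊆ {1, …, n}. -/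
open Matrix MeasureTheory ProbabilityTheory

namespace QSubmodAux

noncomputable def γ (n : ℕ) : Measure (Fin n → ℝ) :=
  Measure.pi fun _ : Fin n => gaussianReal 0 1

lemma integrable_sq_gaussian : Integrable (fun x : ℝ => x ^ 2) (gaussianReal 0 1) := by
  rw [gaussianReal_of_var_ne_zero 0 one_ne_zero]
  rw [integrable_withDensity_iff (measurable_gaussianPDF 0 1)
    (Filter.Eventually.of_forall fun x => ENNReal.ofReal_lt_top)]
  have h1 : Integrable (fun x : ℝ => x ^ 2 * Real.exp (-(1/2) * x ^ 2)) := by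
    have h := integrable_rpow_mul_exp_neg_mul_sq (b := 1/2) (by norm_num) (s := 2) (by norm_num)
    apply h.congr
    filter_upwards with x
    rw [show ((2:ℝ)) = ((2:ℕ):ℝ) by norm_num, Real.rpow_natCast]
  have h2 := h1.const_mul (Real.sqrt (2 * Real.pi * 1))⁻¹
  apply h2.congr
  filter_upwards with x
  have hpd : (gaussianPDF 0 1 x).toReal
      = (Real.sqrt (2 * Real.pi * 1))⁻¹ * Real.exp (-(1/2) * x ^ 2) := by
    rw [gaussianPDF, ENNReal.toReal_ofReal (gaussianPDFReal_nonneg _ _ _), gaussianPDFReal]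
    push_cast
    ring_nf
  rw [hpd]; ring

lemma mp_eval (n : ℕ) (i : Fin n) :
    MeasurePreserving (fun w : Fin n → ℝ => w i) (γ n) (gaussianReal 0 1) := by
  refine ⟨measurable_pi_apply i, ?_⟩
  ext s hs
  rw [Measure.map_apply (measurable_pi_apply i) hs]
  have : (fun w : Fin n → ℝ => w i) ⁻¹' s =
      Set.pi Set.univ (Function.update (fun _ => Set.univ) i s) := by
    rw [Set.eval_preimage]
  rw [γ, this, Measure.pi_pi]
  simp [Function.update_apply, apply_ite]

lemma integrable_eval_sq (n : ℕ) (i : Fin n) :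
    Integrable (fun w : Fin n → ℝ => (w i) ^ 2) (γ n) :=
  (mp_eval n i).integrable_comp
    (integrable_sq_gaussian.aestronglyMeasurable) |>.mpr integrable_sq_gaussian

lemma integrable_eval_mul (n : ℕ) (i j : Fin n) :
    Integrable (fun w : Fin n → ℝ => w i * w j) (γ n) := by
  refine Integrable.mono' (((integrable_eval_sq n i).add (integrable_eval_sq n j)).div_const 2)
    (((measurable_pi_apply i).mul (measurable_pi_apply j)).aestronglyMeasurable) ?_
  filter_upwards with w
  simp only [Pi.add_apply]
  rw [Real.norm_eq_abs, abs_mul]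
  nlinarith [sq_nonneg (|w i| - |w j|), sq_abs (w i), sq_abs (w j), abs_nonneg (w i),
    abs_nonneg (w j)]

lemma integrable_quad (n : ℕ) (M : Matrix (Fin n) (Fin n) ℝ) :
    Integrable (fun w : Fin n → ℝ => w ⬝ᵥ M *ᵥ w) (γ n) := by
  have hrw : (fun w : Fin n → ℝ => w ⬝ᵥ M *ᵥ w)
      = fun w => ∑ i, ∑ j, M i j * (w i * w j) := by
    funext w
    simp only [dotProduct, mulVec, Finset.mul_sum]
    exact Finset.sum_congr rfl fun i _ => Finset.sum_congr rfl fun j _ => by ring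
  rw [hrw]
  exact integrable_finset_sum _ fun i _ =>
    integrable_finset_sum _ fun j _ => (integrable_eval_mul n i j).const_mul _

lemma integrable_min_quad (n : ℕ) (M : Matrix (Fin n) (Fin n) ℝ) :
    Integrable (fun w : Fin n → ℝ => min (w ⬝ᵥ M *ᵥ w) 0) (γ n) := by
  have h := integrable_quad n M
  have hrw : (fun w : Fin n → ℝ => min (w ⬝ᵥ M *ᵥ w) 0)
      = fun w => (w ⬝ᵥ M *ᵥ w - |w ⬝ᵥ M *ᵥ w|) / 2 := by
    funext w
    rcases le_total (w ⬝ᵥ M *ᵥ w) 0 with h' | h'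
    · rw [min_eq_left h', abs_of_nonpos h']; ring
    · rw [min_eq_right h', abs_of_nonneg h']; ring
  rw [hrw]
  exact (h.sub h.abs).div_const 2

lemma min_ineq (x y z : ℝ) (hxy : x ≤ y) (hxz : x ≤ z) :
    min (y + z - x) 0 + min x 0 ≤ min y 0 + min z 0 := by
  simp only [min_def]
  split_ifs <;> linarith

lemma quad_eq (n : ℕ) (A : Matrix (Fin n) (Fin n) ℝ) (α : ℝ) (S : Finset (Fin n))
    (w : Fin n → ℝ) :
    w ⬝ᵥ (A + α • Matrix.diagonal (fun i => if i ∈ S then (1 : ℝ) else 0)) *ᵥ w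
      = w ⬝ᵥ A *ᵥ w + α * ∑ i ∈ S, (w i) ^ 2 := by
  have hd : w ⬝ᵥ (Matrix.diagonal (fun i => if i ∈ S then (1 : ℝ) else 0)) *ᵥ w
      = ∑ i ∈ S, (w i) ^ 2 := by
    simp only [dotProduct, mulVec_diagonal, ite_mul, one_mul, zero_mul, mul_ite, mul_zero,
      Finset.sum_ite_mem, Finset.univ_inter, sq]
  rw [add_mulVec, dotProduct_add, smul_mulVec, dotProduct_smul, smul_eq_mul, hd]

end QSubmodAux

/-- Let `A` be an `n × n` real symmetric matrix, `α ≥ 0`, and `γ` the standard Gaussian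
measure on `ℝⁿ`. Define `Q(S) = ∫ min { wᵀ(A + α D(S))w, 0 } dγ(w)` for `S ⊆ {1, …, n}`.
Then `Q` is monotone nondecreasing and submodular. -/
theorem Q_monotone_and_submodular
    (n : ℕ) (A : Matrix (Fin n) (Fin n) ℝ) (hA : A.IsSymm)
    (α : ℝ) (hα : 0 ≤ α)
    (Q : Finset (Fin n) → ℝ)
    (hQ : ∀ S : Finset (Fin n),
      Q S = ∫ w : Fin n → ℝ,
        min (w ⬝ᵥ (A + α • Matrix.diagonal (fun i => if i ∈ S then (1 : ℝ) else 0)) *ᵥ w) 0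
          ∂(Measure.pi fun _ : Fin n => gaussianReal 0 1)) :
    (∀ S T : Finset (Fin n), S ⊆ T → Q S ≤ Q T) ∧
      (∀ S T : Finset (Fin n), Q (S ∪ T) + Q (S ∩ T) ≤ Q S + Q T) := by
  classical
  set γ := Measure.pi fun _ : Fin n => gaussianReal 0 1 with hγ
  have hint : ∀ S : Finset (Fin n), Integrable
      (fun w : Fin n → ℝ =>
        min (w ⬝ᵥ (A + α • Matrix.diagonal (fun i => if i ∈ S then (1 : ℝ) else 0)) *ᵥ w) 0)
      γ := fun S => QSubmodAux.integrable_min_quad n _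
  constructor
  · intro S T hST
    rw [hQ S, hQ T]
    refine integral_mono (hint S) (hint T) fun w => ?_
    rw [QSubmodAux.quad_eq, QSubmodAux.quad_eq]
    refine min_le_min (add_le_add_right (mul_le_mul_of_nonneg_left ?_ hα) _) le_rfl
    exact Finset.sum_le_sum_of_subset_of_nonneg hST fun i _ _ => sq_nonneg _
  · intro S T
    rw [hQ S, hQ T, hQ (S ∪ T), hQ (S ∩ T),
      ← integral_add (hint (S ∪ T)) (hint (S ∩ T)), ← integral_add (hint S) (hint T)]
    refine integral_mono ((hint (S ∪ T)).add (hint (S ∩ T))) ((hint S).add (hint T))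
      fun w => ?_
    simp only [Pi.add_apply]
    rw [QSubmodAux.quad_eq, QSubmodAux.quad_eq, QSubmodAux.quad_eq, QSubmodAux.quad_eq]
    have hsum : (∑ i ∈ S ∪ T, (w i) ^ 2) + (∑ i ∈ S ∩ T, (w i) ^ 2)
        = (∑ i ∈ S, (w i) ^ 2) + (∑ i ∈ T, (w i) ^ 2) :=
      Finset.sum_union_inter
    have hkey : w ⬝ᵥ A *ᵥ w + α * ∑ i ∈ S ∪ T, (w i) ^ 2
        = (w ⬝ᵥ A *ᵥ w + α * ∑ i ∈ S, (w i) ^ 2)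
          + (w ⬝ᵥ A *ᵥ w + α * ∑ i ∈ T, (w i) ^ 2)
          - (w ⬝ᵥ A *ᵥ w + α * ∑ i ∈ S ∩ T, (w i) ^ 2) := by
      linear_combination α * hsum
    rw [hkey]
    refine QSubmodAux.min_ineq _ _ _ ?_ ?_
    · refine add_le_add_right (mul_le_mul_of_nonneg_left ?_ hα) _
      exact Finset.sum_le_sum_of_subset_of_nonneg Finset.inter_subset_left
        fun i _ _ => sq_nonneg _
    · refine add_le_add_right (mul_le_mul_of_nonneg_left ?_ hα) _
      exact Finset.sum_le_sum_of_subset_of_nonneg Finset.inter_subset_right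
        fun i _ _ => sq_nonneg _
end

section
/- Let L₊ and L₋ be n×n real symmetric matrices, let L = L₊ − L₋, and let S ⊆ {1, …, n} be nonempty. Let ζ > 0 be such that every eigenvalue of L₋(S) is at most ζ (i.e., L₋(S) ⪯ ζI). If L₊(S) is positive definite and trace((L₊(S))⁻¹) < 1/ζ, then L(S) is positive definite. -/
open Matrix

/-- The principal submatrix of `M` formed by the rows and columns indexed by `S`. -/
def principalSubmatrix {n : ℕ} (M : Matrix (Fin n) (Fin n) ℝ) (S : Finset (Fin n)) :
    Matrix {i // i ∈ S} {i // i ∈ S} ℝ :=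
  M.submatrix Subtype.val Subtype.val

/-- Conjugation by a unitary matrix preserves positive definiteness. -/
lemma posDef_unitary_conj {m : Type*} [Fintype m] [DecidableEq m]
    {A : Matrix m m ℝ} (hA : A.PosDef) (U : Matrix m m ℝ) (hU : U * Uᴴ = 1) :
    (U * A * Uᴴ).PosDef := by
  rw [posDef_iff_dotProduct_mulVec]
  constructor
  · have h := isHermitian_conjTranspose_mul_mul Uᴴ hA.1
    simpa using h
  · intro x hx
    have hx' : Uᴴ *ᵥ x ≠ 0 := by
      intro h
      apply hx
      have : U *ᵥ (Uᴴ *ᵥ x) = x := by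
        rw [mulVec_mulVec, hU, one_mulVec]
      rw [h, mulVec_zero] at this
      exact this.symm
    have := hA.dotProduct_mulVec_pos hx'
    simpa only [star_mulVec, dotProduct_mulVec, vecMul_vecMul, conjTranspose_conjTranspose,
      mul_assoc] using this

/-- If `A ≻ 0` and `trace A⁻¹ < 1/ζ` with `ζ > 0`, then `A - ζ I ≻ 0`. -/
lemma key_sub_posDef {m : Type*} [Fintype m] [DecidableEq m]
    {A : Matrix m m ℝ} (hA : A.PosDef) {ζ : ℝ} (hζ : 0 < ζ)
    (htr : Matrix.trace A⁻¹ < 1 / ζ) :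
    (A - ζ • (1 : Matrix m m ℝ)).PosDef := by
  have hH := hA.isHermitian
  set μ := hH.eigenvalues with hμ
  set U : Matrix m m ℝ := (hH.eigenvectorUnitary : Matrix m m ℝ) with hUdef
  have hUU : U * star U = 1 := (Matrix.mem_unitaryGroup_iff).mp hH.eigenvectorUnitary.2
  have hUU' : star U * U = 1 := (Matrix.mem_unitaryGroup_iff').mp hH.eigenvectorUnitary.2
  have hspec : A = U * Matrix.diagonal μ * star U := by
    have := hH.spectral_theorem
    simpa [Function.comp] using this
  have hμpos : ∀ i, 0 < μ i := fun i => hA.eigenvalues_pos i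
  -- inverse of A
  have hAinv : A⁻¹ = U * Matrix.diagonal (fun i => (μ i)⁻¹) * star U := by
    apply Matrix.inv_eq_right_inv
    rw [hspec]
    have hDD : Matrix.diagonal μ * Matrix.diagonal (fun i => (μ i)⁻¹) = 1 := by
      rw [Matrix.diagonal_mul_diagonal]
      have hfun : (fun i => μ i * (μ i)⁻¹) = fun _ => (1 : ℝ) :=
        funext fun i => mul_inv_cancel₀ (hμpos i).ne'
      rw [hfun, Matrix.diagonal_one]
    have hassoc : U * Matrix.diagonal μ * star U * (U * Matrix.diagonal (fun i => (μ i)⁻¹) * star U)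
        = U * (Matrix.diagonal μ * (star U * U) * Matrix.diagonal (fun i => (μ i)⁻¹)) * star U := by
      simp only [Matrix.mul_assoc]
    rw [hassoc, hUU', Matrix.mul_one, hDD, Matrix.mul_one, hUU]
  -- trace of inverse is sum of reciprocals of eigenvalues
  have htrace : Matrix.trace A⁻¹ = ∑ i, (μ i)⁻¹ := by
    rw [hAinv, Matrix.trace_mul_cycle, hUU', one_mul, Matrix.trace_diagonal]
  -- each eigenvalue exceeds ζ
  have hgt : ∀ i, ζ < μ i := by
    intro i
    have h1 : (μ i)⁻¹ ≤ ∑ j, (μ j)⁻¹ :=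
      Finset.single_le_sum (fun j _ => (inv_pos.mpr (hμpos j)).le) (Finset.mem_univ i)
    have h2 : (μ i)⁻¹ < ζ⁻¹ := by
      rw [htrace] at htr
      rw [one_div] at htr
      exact lt_of_le_of_lt h1 htr
    have := (inv_lt_inv₀ (hμpos i) hζ).mp h2
    exact this
  -- A - ζ I = U (D - ζ I) Uᴴ
  have hsub : A - ζ • (1 : Matrix m m ℝ) =
      U * Matrix.diagonal (fun i => μ i - ζ) * star U := by
    have hdiag : Matrix.diagonal (fun i => μ i - ζ) =
        Matrix.diagonal μ - ζ • (1 : Matrix m m ℝ) := by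
      ext i j
      by_cases h : i = j
      · subst h
        simp [Matrix.one_apply_eq]
      · simp [Matrix.diagonal_apply_ne _ h, Matrix.one_apply_ne h]
    rw [hdiag, Matrix.mul_sub, Matrix.sub_mul, ← hspec]
    congr 1
    rw [Matrix.mul_smul, Matrix.smul_mul, mul_one, hUU]
  rw [hsub]
  have hD : (Matrix.diagonal (fun i => μ i - ζ)).PosDef :=
    Matrix.posDef_diagonal_iff.mpr (fun i => sub_pos.mpr (hgt i))
  exact posDef_unitary_conj hD U (by exact hUU)

/-- Let `L₊`, `L₋` be `n × n` real symmetric matrices, `L = L₊ - L₋`, and `S` a nonempty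
index set. Let `ζ > 0` be such that `L₋(S) ⪯ ζ I`. If `L₊(S)` is positive definite and
`trace((L₊(S))⁻¹) < 1/ζ`, then `L(S)` is positive definite. -/
theorem posDef_of_inv_trace_lt
    (n : ℕ) (Lp Lm : Matrix (Fin n) (Fin n) ℝ)
    (hLp : Lp.IsSymm) (hLm : Lm.IsSymm)
    (L : Matrix (Fin n) (Fin n) ℝ) (hL : L = Lp - Lm)
    (S : Finset (Fin n)) (hS : S.Nonempty)
    (ζ : ℝ) (hζ : 0 < ζ)
    (hLmS : (ζ • (1 : Matrix {i // i ∈ S} {i // i ∈ S} ℝ) -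
        principalSubmatrix Lm S).PosSemidef)
    (hLpS : (principalSubmatrix Lp S).PosDef)
    (htr : Matrix.trace (principalSubmatrix Lp S)⁻¹ < 1 / ζ) :
    (principalSubmatrix L S).PosDef := by
  have hsplit : principalSubmatrix L S =
      (principalSubmatrix Lp S - ζ • (1 : Matrix {i // i ∈ S} {i // i ∈ S} ℝ)) +
      (ζ • (1 : Matrix {i // i ∈ S} {i // i ∈ S} ℝ) - principalSubmatrix Lm S) := by
    have h0 : principalSubmatrix L S = principalSubmatrix Lp S - principalSubmatrix Lm S := by
      rw [hL]; rfl
    rw [h0]; abel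
  rw [hsplit]
  exact (key_sub_posDef hLpS hζ htr).add_posSemidef hLmS
end

section
/- Let A be an n×n real symmetric positive definite matrix whose off-diagonal entries are all nonpositive (i.e., A is a symmetric positive definite M-matrix). Then the set function S ↦ trace((A(S))⁻¹) is supermodular on subsets of {1, …, n}: for all S, T ⊆ {1, …, n}, trace((A(S))⁻¹) + trace((A(T))⁻¹) ≤ trace((A(S ∪ T))⁻¹) + trace((A(S ∩ T))⁻¹), where by convention the trace of the inverse of the empty submatrix is 0. -/
open Matrix

section Aux

lemma superprod {a b A B a' b' A' B' : ℝ}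
    (h0B : 0 ≤ B) (hBa : B ≤ a) (hBb : B ≤ b)
    (h0B' : 0 ≤ B') (hBa' : B' ≤ a') (hBb' : B' ≤ b')
    (hsup : a + b ≤ A + B) (hsup' : a' + b' ≤ A' + B') :
    a * a' + b * b' ≤ A * A' + B * B' := by
  nlinarith [mul_nonneg (sub_nonneg.2 hBa) (sub_nonneg.2 hBb'),
    mul_nonneg (sub_nonneg.2 hBb) (sub_nonneg.2 hBa'),
    mul_nonneg (by linarith : (0:ℝ) ≤ A - (a + b - B)) (by linarith : (0:ℝ) ≤ A'),
    mul_nonneg (by linarith : (0:ℝ) ≤ a + b - B) (by linarith : (0:ℝ) ≤ A' + B' - (a' + b'))]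

namespace SuperAux

variable {n : ℕ}

def padM (N : Matrix (Fin n) (Fin n) ℝ) (S : Finset (Fin n)) : Matrix (Fin n) (Fin n) ℝ :=
  Matrix.of fun i j => if i ∈ S ∧ j ∈ S then N i j else 0

def embedM (S : Finset (Fin n)) (M : Matrix {i // i ∈ S} {i // i ∈ S} ℝ) :
    Matrix (Fin n) (Fin n) ℝ :=
  Matrix.of fun i j => if h : i ∈ S ∧ j ∈ S then M ⟨i, h.1⟩ ⟨j, h.2⟩ else 0

lemma embedM_mul (S : Finset (Fin n)) (M M' : Matrix {i // i ∈ S} {i // i ∈ S} ℝ) :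
    embedM S M * embedM S M' = embedM S (M * M') := by
  ext i j
  rw [Matrix.mul_apply]
  simp only [embedM, Matrix.of_apply]
  by_cases hij : i ∈ S ∧ j ∈ S
  · rw [dif_pos hij, Matrix.mul_apply]
    rw [← Finset.sum_subset (Finset.subset_univ S) (by
      intro l _ hl
      rw [dif_neg (by tauto), zero_mul])]
    rw [Finset.sum_subtype S (fun _ => Iff.rfl)
      (fun l => (if h : i ∈ S ∧ l ∈ S then M ⟨i, h.1⟩ ⟨l, h.2⟩ else 0) *
        (if h : l ∈ S ∧ j ∈ S then M' ⟨l, h.1⟩ ⟨j, h.2⟩ else 0))]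
    refine Finset.sum_congr rfl fun l _ => ?_
    rw [dif_pos ⟨hij.1, l.2⟩, dif_pos ⟨l.2, hij.2⟩]
  · rw [dif_neg hij]
    refine Finset.sum_eq_zero fun l _ => ?_
    rcases not_and_or.mp hij with h | h
    · rw [dif_neg (show ¬(i ∈ S ∧ l ∈ S) by tauto), zero_mul]
    · rw [dif_neg (show ¬(l ∈ S ∧ j ∈ S) by tauto), mul_zero]

lemma trace_embedM (S : Finset (Fin n)) (M : Matrix {i // i ∈ S} {i // i ∈ S} ℝ) :
    (embedM S M).trace = M.trace := by
  rw [Matrix.trace, Matrix.trace]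
  rw [← Finset.sum_subset (Finset.subset_univ S) (by
    intro l _ hl
    simp [Matrix.diag, embedM, hl])]
  rw [Finset.sum_subtype S (fun _ => Iff.rfl) (fun l => (embedM S M).diag l)]
  refine Finset.sum_congr rfl fun l _ => ?_
  simp [Matrix.diag, embedM, l.2]

lemma padM_eq (N : Matrix (Fin n) (Fin n) ℝ) (S : Finset (Fin n)) :
    padM N S = embedM S (principalSubmatrix N S) := by
  ext i j
  simp only [padM, embedM, Matrix.of_apply]
  split_ifs with h
  · rfl
  · rfl

lemma padM_pow (N : Matrix (Fin n) (Fin n) ℝ) (S : Finset (Fin n)) (k : ℕ) :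
    padM N S ^ (k + 1) = embedM S ((principalSubmatrix N S) ^ (k + 1)) := by
  induction k with
  | zero => rw [pow_one, pow_one, padM_eq]
  | succ k ih =>
      rw [pow_succ, ih, padM_eq, embedM_mul, ← pow_succ]

lemma trace_padM_pow (N : Matrix (Fin n) (Fin n) ℝ) (S : Finset (Fin n)) (k : ℕ) :
    (padM N S ^ (k + 1)).trace = ((principalSubmatrix N S) ^ (k + 1)).trace := by
  rw [padM_pow, trace_embedM]

variable {N : Matrix (Fin n) (Fin n) ℝ} (hN : ∀ i j, 0 ≤ N i j)
include hN

lemma padM_nonneg (S : Finset (Fin n)) (i j : Fin n) : 0 ≤ padM N S i j := by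
  simp only [padM, Matrix.of_apply]; split_ifs
  · exact hN i j
  · exact le_refl _

lemma padM_mono {S T : Finset (Fin n)} (hST : S ⊆ T) (i j : Fin n) :
    padM N S i j ≤ padM N T i j := by
  simp only [padM, Matrix.of_apply]
  split_ifs with h1 h2
  · exact le_refl _
  · exact absurd ⟨hST h1.1, hST h1.2⟩ h2
  · exact hN i j
  · exact le_refl _

lemma padM_supmod (S T : Finset (Fin n)) (i j : Fin n) :
    padM N S i j + padM N T i j ≤ padM N (S ∪ T) i j + padM N (S ∩ T) i j := by
  by_cases hiS : i ∈ S <;> by_cases hjS : j ∈ S <;> by_cases hiT : i ∈ T <;>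
    by_cases hjT : j ∈ T <;>
    simp [padM, Finset.mem_union, Finset.mem_inter, hiS, hjS, hiT, hjT] <;>
    linarith [hN i j]

lemma padM_pow_nonneg (k : ℕ) (S : Finset (Fin n)) (i j : Fin n) :
    0 ≤ (padM N S ^ k) i j := by
  induction k generalizing i j with
  | zero =>
      rw [pow_zero]
      rw [Matrix.one_apply]
      split_ifs <;> norm_num
  | succ k ih =>
      rw [pow_succ, Matrix.mul_apply]
      exact Finset.sum_nonneg fun l _ => mul_nonneg (ih i l) (padM_nonneg hN S l j)

lemma padM_pow_mono (k : ℕ) {S T : Finset (Fin n)} (hST : S ⊆ T) (i j : Fin n) :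
    (padM N S ^ k) i j ≤ (padM N T ^ k) i j := by
  induction k generalizing i j with
  | zero => rw [pow_zero, pow_zero]
  | succ k ih =>
      rw [pow_succ, pow_succ, Matrix.mul_apply, Matrix.mul_apply]
      refine Finset.sum_le_sum fun l _ => ?_
      exact mul_le_mul (ih i l) (padM_mono hN hST l j) (padM_nonneg hN S l j)
        (padM_pow_nonneg hN k T i l)

lemma padM_pow_supmod (k : ℕ) (S T : Finset (Fin n)) (i j : Fin n) :
    (padM N S ^ k) i j + (padM N T ^ k) i j ≤
      (padM N (S ∪ T) ^ k) i j + (padM N (S ∩ T) ^ k) i j := by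
  induction k generalizing i j with
  | zero => simp
  | succ k ih =>
      rw [pow_succ, pow_succ, pow_succ, pow_succ]
      rw [Matrix.mul_apply, Matrix.mul_apply, Matrix.mul_apply, Matrix.mul_apply]
      rw [← Finset.sum_add_distrib, ← Finset.sum_add_distrib]
      refine Finset.sum_le_sum fun l _ => ?_
      refine superprod (padM_pow_nonneg hN k (S ∩ T) i l)
        (padM_pow_mono hN k Finset.inter_subset_left i l)
        (padM_pow_mono hN k Finset.inter_subset_right i l)
        (padM_nonneg hN (S ∩ T) l j)
        (padM_mono hN Finset.inter_subset_left l j)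
        (padM_mono hN Finset.inter_subset_right l j)
        ?_ ?_
      · have := ih i l
        linarith
      · have := padM_supmod hN S T l j
        linarith

lemma trace_padM_supmod (k : ℕ) (S T : Finset (Fin n)) :
    (padM N S ^ k).trace + (padM N T ^ k).trace ≤
      (padM N (S ∪ T) ^ k).trace + (padM N (S ∩ T) ^ k).trace := by
  simp only [Matrix.trace, Matrix.diag, ← Finset.sum_add_distrib]
  exact Finset.sum_le_sum fun i _ => padM_pow_supmod hN k S T i i

end SuperAux

lemma myConjPow {ι : Type*} [Fintype ι] [DecidableEq ι] (U C V : Matrix ι ι ℝ)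
    (hUV : U * V = 1) (hVU : V * U = 1) (k : ℕ) :
    (U * C * V) ^ k = U * C ^ k * V := by
  induction k with
  | zero => rw [pow_zero, pow_zero, Matrix.mul_one, hUV]
  | succ k ih =>
      rw [pow_succ, ih, pow_succ]
      calc U * C ^ k * V * (U * C * V) = U * C ^ k * (V * U) * C * V := by
            simp only [Matrix.mul_assoc]
        _ = U * (C ^ k * C) * V := by rw [hVU, Matrix.mul_one]; simp only [Matrix.mul_assoc]

lemma trace_inv_hasSum {ι : Type*} [Fintype ι] [DecidableEq ι] {B : Matrix ι ι ℝ}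
    (hB : B.PosDef) {d : ℝ} (hd0 : 0 < d) (hd : B.trace < d) :
    HasSum (fun k : ℕ => Matrix.trace ((d • (1 : Matrix ι ι ℝ) - B) ^ k) / d ^ (k + 1))
      (Matrix.trace B⁻¹) := by
  have hH : B.IsHermitian := hB.isHermitian
  set U : Matrix ι ι ℝ := (hH.eigenvectorUnitary : Matrix ι ι ℝ) with hU
  set ev : ι → ℝ := hH.eigenvalues with hev
  have hUV : U * star U = 1 := Matrix.mem_unitaryGroup_iff.mp (hH.eigenvectorUnitary).2
  have hVU : star U * U = 1 := Matrix.mem_unitaryGroup_iff'.mp (hH.eigenvectorUnitary).2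
  have hspec : B = U * Matrix.diagonal ev * star U := by
    have := hH.spectral_theorem
    rwa [RCLike.ofReal_real_eq_id, Function.id_comp] at this
  have htrd : ∀ f : ι → ℝ, Matrix.trace (U * Matrix.diagonal f * star U) = ∑ i, f i := by
    intro f
    rw [Matrix.trace_mul_cycle, hVU, Matrix.one_mul, Matrix.trace_diagonal]
  have hdmB : d • (1 : Matrix ι ι ℝ) - B = U * Matrix.diagonal (fun i => d - ev i) * star U := by
    have h1 : d • (1 : Matrix ι ι ℝ) = U * Matrix.diagonal (fun _ => d) * star U := by
      rw [← Matrix.smul_one_eq_diagonal]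
      rw [Matrix.mul_smul, Matrix.smul_mul, Matrix.mul_one, hUV]
    rw [hspec, h1, ← Matrix.sub_mul, ← Matrix.mul_sub, Matrix.diagonal_sub]
  have key : ∀ k : ℕ, Matrix.trace ((d • (1 : Matrix ι ι ℝ) - B) ^ k) = ∑ i, (d - ev i) ^ k := by
    intro k
    rw [hdmB, myConjPow _ _ _ hUV hVU, Matrix.diagonal_pow, htrd]
    simp [Pi.pow_apply]
  have hpos : ∀ i, 0 < ev i := hB.eigenvalues_pos
  have hsum : ∑ i, ev i = B.trace := by
    conv_rhs => rw [hspec]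
    rw [htrd]
  have hlt : ∀ i, ev i < d := fun i =>
    lt_of_le_of_lt (hsum ▸ Finset.single_le_sum (fun j _ => (hpos j).le) (Finset.mem_univ i)) hd
  have hinv : Matrix.trace B⁻¹ = ∑ i, (ev i)⁻¹ := by
    have h1 : (U * Matrix.diagonal (fun i => (ev i)⁻¹) * star U) * B = 1 := by
      conv_lhs => rw [hspec]
      calc U * Matrix.diagonal (fun i => (ev i)⁻¹) * star U * (U * Matrix.diagonal ev * star U)
          = U * Matrix.diagonal (fun i => (ev i)⁻¹) * (star U * U) * Matrix.diagonal ev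
              * star U := by
            simp only [Matrix.mul_assoc]
        _ = U * (Matrix.diagonal (fun i => (ev i)⁻¹) * Matrix.diagonal ev) * star U := by
            rw [hVU, Matrix.mul_one]; simp only [Matrix.mul_assoc]
        _ = 1 := by
            rw [Matrix.diagonal_mul_diagonal]
            have : (fun i => (ev i)⁻¹ * ev i) = fun _ => (1:ℝ) := by
              funext i; exact inv_mul_cancel₀ (hpos i).ne'
            rw [this, Matrix.diagonal_one, Matrix.mul_one, hUV]
    rw [Matrix.inv_eq_left_inv h1, htrd]
  rw [hinv]
  have hfun : (fun k : ℕ => Matrix.trace ((d • (1 : Matrix ι ι ℝ) - B) ^ k) / d ^ (k + 1)) =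
      fun k : ℕ => ∑ i, ((d - ev i) / d) ^ k * d⁻¹ := by
    funext k
    rw [key, Finset.sum_div]
    refine Finset.sum_congr rfl fun i _ => ?_
    rw [div_pow, pow_succ]
    field_simp
  rw [hfun]
  refine hasSum_sum fun i _ => ?_
  have h0 : 0 ≤ (d - ev i) / d := div_nonneg (by linarith [hlt i]) hd0.le
  have h1 : (d - ev i) / d < 1 := (div_lt_one hd0).2 (by linarith [hpos i])
  have H := (hasSum_geometric_of_lt_one h0 h1).mul_right d⁻¹
  convert H using 1
  · rfl
  have h2 : (1 : ℝ) - (d - ev i) / d = ev i / d := by field_simp; ring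
  rw [h2, inv_div]
  have h3 : d ≠ 0 := hd0.ne'
  field_simp

lemma posDef_diag {n : ℕ} {A : Matrix (Fin n) (Fin n) ℝ} (hA : A.PosDef) (i : Fin n) :
    0 < A i i := by
  have := hA.dotProduct_mulVec_pos (x := Pi.single i 1) (by
    intro h
    have := congrFun h i
    simp [Pi.single_apply] at this)
  simpa [dotProduct, Matrix.mulVec, Pi.single_apply, Finset.sum_ite_eq] using this

lemma posDef_principal {n : ℕ} {A : Matrix (Fin n) (Fin n) ℝ} (hA : A.PosDef)
    (S : Finset (Fin n)) : (principalSubmatrix A S).PosDef := by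
  refine Matrix.PosDef.of_dotProduct_mulVec_pos (hA.1.submatrix _) fun x hx => ?_
  set y : Fin n → ℝ := fun i => if h : i ∈ S then x ⟨i, h⟩ else 0 with hy
  have hyne : y ≠ 0 := by
    intro h
    apply hx
    funext l
    have := congrFun h (l : Fin n)
    simpa [hy, l.2] using this
  have hmv : ∀ j : Fin n, (A *ᵥ y) j = ∑ i : {i // i ∈ S}, A j i * x i := by
    intro j
    rw [Matrix.mulVec, dotProduct]
    rw [← Finset.sum_subset (Finset.subset_univ S) (by
      intro l _ hl
      simp [hy, hl])]
    rw [Finset.sum_subtype S (fun _ => Iff.rfl) (fun l => A j l * y l)]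
    refine Finset.sum_congr rfl fun l _ => ?_
    simp [hy, l.2]
  have hkey : star x ⬝ᵥ (principalSubmatrix A S) *ᵥ x = star y ⬝ᵥ A *ᵥ y := by
    rw [star_trivial, star_trivial]
    rw [dotProduct, dotProduct]
    rw [← Finset.sum_subset (Finset.subset_univ S) (by
      intro l _ hl
      simp [hy, hl])]
    rw [Finset.sum_subtype S (fun _ => Iff.rfl) (fun l => y l * (A *ᵥ y) l)]
    refine Finset.sum_congr rfl fun l _ => ?_
    rw [hmv]
    simp [hy, l.2, principalSubmatrix, Matrix.mulVec, dotProduct, Matrix.submatrix]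
  rw [hkey]
  exact hA.dotProduct_mulVec_pos hyne

end Aux

/-- Let `A` be an `n × n` real symmetric positive definite matrix with nonpositive
off-diagonal entries (a symmetric positive definite M-matrix). Then
`S ↦ trace((A(S))⁻¹)` is supermodular: for all `S, T ⊆ {1, …, n}`,
`trace((A(S))⁻¹) + trace((A(T))⁻¹) ≤ trace((A(S ∪ T))⁻¹) + trace((A(S ∩ T))⁻¹)`. -/
theorem trace_inv_supermodular
    (n : ℕ) (A : Matrix (Fin n) (Fin n) ℝ)
    (hA : A.PosDef)
    (hoff : ∀ i j : Fin n, i ≠ j → A i j ≤ 0)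
    (S T : Finset (Fin n)) :
    Matrix.trace (principalSubmatrix A S)⁻¹ + Matrix.trace (principalSubmatrix A T)⁻¹ ≤
      Matrix.trace (principalSubmatrix A (S ∪ T))⁻¹ +
        Matrix.trace (principalSubmatrix A (S ∩ T))⁻¹ := by
  classical
  set d : ℝ := (∑ i, A i i) + 1 with hd
  have hdiag : ∀ i, 0 < A i i := posDef_diag hA
  have hd0 : 0 < d := by
    have : (0:ℝ) ≤ ∑ i, A i i := Finset.sum_nonneg fun i _ => (hdiag i).le
    simp only [hd]; linarith
  set N : Matrix (Fin n) (Fin n) ℝ := d • (1 : Matrix (Fin n) (Fin n) ℝ) - A with hNdef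
  have hN : ∀ i j, 0 ≤ N i j := by
    intro i j
    simp only [hNdef, Matrix.sub_apply, Matrix.smul_apply, Matrix.one_apply, smul_eq_mul]
    by_cases hij : i = j
    · subst hij
      rw [if_pos rfl, mul_one]
      have : A i i ≤ ∑ l, A l l :=
        Finset.single_le_sum (fun l _ => (hdiag l).le) (Finset.mem_univ i)
      simp only [hd]; linarith
    · simp only [if_neg hij, mul_zero]
      linarith [hoff i j hij]
  have htrace : ∀ X : Finset (Fin n), (principalSubmatrix A X).trace = ∑ i ∈ X, A i i := by
    intro X
    rw [Matrix.trace]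
    exact (Finset.sum_subtype X (fun _ => Iff.rfl) fun i => A i i).symm
  have htrlt : ∀ X : Finset (Fin n), (principalSubmatrix A X).trace < d := by
    intro X
    rw [htrace]
    have h1 : ∑ i ∈ X, A i i ≤ ∑ i, A i i :=
      Finset.sum_le_sum_of_subset_of_nonneg (Finset.subset_univ X)
        (fun i _ _ => (hdiag i).le)
    simp only [hd]; linarith
  have hBX : ∀ X : Finset (Fin n),
      principalSubmatrix N X =
        d • (1 : Matrix {i // i ∈ X} {i // i ∈ X} ℝ) - principalSubmatrix A X := by
    intro X
    ext i j
    simp only [principalSubmatrix, Matrix.submatrix_apply, hNdef, Matrix.sub_apply,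
      Matrix.smul_apply, Matrix.one_apply, smul_eq_mul]
    congr 1
    by_cases h : i = j
    · subst h; simp
    · rw [if_neg h, if_neg (fun hc => h (Subtype.ext hc))]
  have H : ∀ X : Finset (Fin n),
      HasSum (fun k : ℕ =>
          Matrix.trace ((d • (1 : Matrix {i // i ∈ X} {i // i ∈ X} ℝ) -
            principalSubmatrix A X) ^ k) / d ^ (k + 1))
        (Matrix.trace (principalSubmatrix A X)⁻¹) :=
    fun X => trace_inv_hasSum (posDef_principal hA X) hd0 (htrlt X)
  refine hasSum_le ?_ ((H S).add (H T)) ((H (S ∪ T)).add (H (S ∩ T)))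
  intro k
  cases k with
  | zero =>
      apply le_of_eq
      simp only [pow_zero, Matrix.trace_one, Fintype.card_coe, pow_one]
      rw [← add_div, ← add_div]
      congr 1
      exact_mod_cast (Finset.card_union_add_card_inter S T).symm
  | succ k =>
      rw [← add_div, ← add_div]
      rw [div_le_div_iff_of_pos_right (pow_pos hd0 (k + 1 + 1))]
      have e : ∀ X : Finset (Fin n),
          Matrix.trace ((d • (1 : Matrix {i // i ∈ X} {i // i ∈ X} ℝ) -
            principalSubmatrix A X) ^ (k + 1)) = (SuperAux.padM N X ^ (k + 1)).trace := by
        intro X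
        rw [← hBX X, ← SuperAux.trace_padM_pow]
      rw [e S, e T, e (S ∪ T), e (S ∩ T)]
      exact SuperAux.trace_padM_supmod hN (k + 1) S T
end

section
/- Let A be an n×n real symmetric positive definite matrix with n ≥ 2. Then the smallest eigenvalue of A satisfies λ_min(A) ≥ ((n−1)/trace(A))^{n−1} · det(A). -/
open Matrix Finset

lemma amgm_prod_le {ι : Type*} (s : Finset ι) (f : ι → ℝ) (hf : ∀ i ∈ s, 0 ≤ f i) :
    ∏ i ∈ s, f i ≤ ((∑ i ∈ s, f i) / s.card) ^ s.card := by
  rcases Finset.eq_empty_or_nonempty s with rfl | hs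
  · simp
  have hk : (0:ℝ) < s.card := by exact_mod_cast Finset.card_pos.2 hs
  have h := Real.geom_mean_le_arith_mean_weighted s (fun _ => 1 / s.card) f
    (fun i _ => by positivity)
    (by rw [Finset.sum_const, nsmul_eq_mul]; field_simp) hf
  have hl : ∀ i ∈ s, f i ^ ((1:ℝ) / s.card) ≥ 0 := fun i hi => Real.rpow_nonneg (hf i hi) _
  calc ∏ i ∈ s, f i = (∏ i ∈ s, f i ^ ((1:ℝ) / s.card)) ^ s.card := by
        rw [← Finset.prod_pow]
        refine Finset.prod_congr rfl fun i hi => ?_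
        rw [← Real.rpow_natCast (f i ^ ((1:ℝ)/s.card)), ← Real.rpow_mul (hf i hi)]
        field_simp
        simp
    _ ≤ ((∑ i ∈ s, (1 / s.card : ℝ) * f i)) ^ s.card := by
        apply pow_le_pow_left₀ (Finset.prod_nonneg hl) h
    _ = ((∑ i ∈ s, f i) / s.card) ^ s.card := by
        rw [← Finset.mul_sum]; ring_nf

lemma trace_eq_sum_eigs {n : ℕ} {A : Matrix (Fin n) (Fin n) ℝ} (hA : A.IsHermitian) :
    A.trace = ∑ i, hA.eigenvalues i := by
  conv_lhs => rw [hA.spectral_theorem]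
  rw [Unitary.conjStarAlgAut_apply, Matrix.trace_mul_cycle,
    (Matrix.mem_unitaryGroup_iff').mp (Matrix.IsHermitian.eigenvectorUnitary hA).2, Matrix.one_mul,
    Matrix.trace_diagonal]
  simp

/-- Lower bound on the smallest eigenvalue: if `A` is an `n × n` real symmetric positive
definite matrix with `n ≥ 2`, then
`λ_min(A) ≥ ((n-1)/trace(A))^(n-1) · det(A)`. -/
theorem lambda_min_ge_det_bound
    (n : ℕ) (hn : 2 ≤ n)
    (A : Matrix (Fin n) (Fin n) ℝ) (hA : A.PosDef) :
    (((n - 1 : ℕ) : ℝ) / A.trace) ^ (n - 1) * A.det ≤ ⨅ i, hA.1.eigenvalues i := by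
  have hne : Nonempty (Fin n) := ⟨⟨0, by omega⟩⟩
  set f := hA.1.eigenvalues with hf
  have hpos : ∀ i, 0 < f i := fun i => hA.eigenvalues_pos i
  have htr : A.trace = ∑ i, f i := trace_eq_sum_eigs hA.1
  have hdet : A.det = ∏ i, f i := by
    simpa using hA.1.det_eq_prod_eigenvalues
  have htrpos : 0 < A.trace := htr ▸ Finset.sum_pos (fun i _ => hpos i) Finset.univ_nonempty
  -- find the minimizer
  obtain ⟨j, -, hj⟩ := Finset.exists_min_image Finset.univ f ⟨Classical.arbitrary _, Finset.mem_univ _⟩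
  have hj' : ∀ i, f j ≤ f i := fun i => hj i (Finset.mem_univ i)
  have hcard : (Finset.univ.erase j).card = n - 1 := by
    rw [Finset.card_erase_of_mem (Finset.mem_univ j), Finset.card_univ, Fintype.card_fin]
  have key : (((n - 1 : ℕ) : ℝ) / A.trace) ^ (n - 1) * A.det ≤ f j := by
    have hprod : ∏ i ∈ Finset.univ.erase j, f i ≤ (A.trace / ((n-1 : ℕ) : ℝ)) ^ (n - 1) := by
      have h1 := amgm_prod_le (Finset.univ.erase j) f (fun i _ => (hpos i).le)
      rw [hcard] at h1
      have hn1 : (0:ℝ) < ((n-1:ℕ):ℝ) := by exact_mod_cast Nat.sub_pos_of_lt hn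
      refine h1.trans (pow_le_pow_left₀ (div_nonneg (Finset.sum_nonneg fun i _ => (hpos i).le) hn1.le) ?_ _)
      apply div_le_div_of_nonneg_right (c := ((n-1:ℕ):ℝ)) ?_ hn1.le
      rw [htr, ← Finset.sum_erase_add _ _ (Finset.mem_univ j)]
      exact le_add_of_nonneg_right (hpos j).le
    have hdet' : A.det = f j * ∏ i ∈ Finset.univ.erase j, f i := by
      rw [hdet, ← Finset.prod_erase_mul _ _ (Finset.mem_univ j)]; ring
    have hn1 : (0:ℝ) < ((n-1:ℕ):ℝ) := by exact_mod_cast Nat.sub_pos_of_lt hn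
    calc (((n - 1 : ℕ) : ℝ) / A.trace) ^ (n - 1) * A.det
        = (((n - 1 : ℕ) : ℝ) / A.trace) ^ (n - 1) * (f j * ∏ i ∈ Finset.univ.erase j, f i) := by
          rw [hdet']
      _ ≤ (((n - 1 : ℕ) : ℝ) / A.trace) ^ (n - 1) * (f j * (A.trace / ((n-1:ℕ):ℝ)) ^ (n-1)) := by
          apply mul_le_mul_of_nonneg_left (mul_le_mul_of_nonneg_left hprod (hpos j).le)
          positivity
      _ = f j := by
          have h2 : (((n-1:ℕ):ℝ)/A.trace) * (A.trace/((n-1:ℕ):ℝ)) = 1 := by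
            rw [div_mul_div_comm, mul_comm]
            exact div_self (by positivity)
          rw [mul_comm (f j), ← mul_assoc, ← mul_pow, h2, one_pow, one_mul]
  exact le_ciInf fun i => key.trans (hj' i)
end

section
/- Let L be an n×n real symmetric positive semidefinite matrix, and let α > 0 and ζ > 0. Then the set function f₂(S) = log det( L + α·D(S) + ζI ) is monotone nondecreasing and submodular on subsets of {1, …, n}. -/
open Matrix

/-- Rank-one diagonal update of the determinant. -/
lemma aux_det_add_std {n : ℕ} (A : Matrix (Fin n) (Fin n) ℝ) (i : Fin n) (c : ℝ) :
    (A + c • Matrix.single i i 1).det = A.det + c * A.adjugate i i := by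
  have h : A + c • Matrix.single i i 1
      = A.updateCol i ((fun a => A a i) + c • (Pi.single i 1 : Fin n → ℝ)) := by
    ext a b
    by_cases hb : b = i <;> by_cases ha : a = i <;>
      simp [updateCol_apply, Matrix.single, ha, hb, Ne.symm, Pi.single_apply, eq_comm]
  have h2 : (A.updateCol i (Pi.single i 1)).det = A.adjugate i i := by
    calc (A.updateCol i (Pi.single i 1)).det
        = (Aᵀ.updateRow i (Pi.single i 1)).det := by
          rw [← det_transpose, ← updateRow_transpose]
      _ = Aᵀ.adjugate i i := (adjugate_apply _ _ _).symm
      _ = A.adjugate i i := by rw [← adjugate_transpose, transpose_apply]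
  rw [h, det_updateCol_add, updateCol_eq_self, det_updateCol_smul, h2]

lemma aux_psd_diag {n : ℕ} {M : Matrix (Fin n) (Fin n) ℝ} (hM : M.PosSemidef) (i : Fin n) :
    0 ≤ M i i := by
  have := hM.dotProduct_mulVec_nonneg (Pi.single i 1)
  simpa [dotProduct, Pi.single_apply, mulVec, Finset.sum_ite_eq] using this

lemma aux_pd_diag {n : ℕ} {M : Matrix (Fin n) (Fin n) ℝ} (hM : M.PosDef) (i : Fin n) :
    0 < M i i := by
  have := hM.dotProduct_mulVec_pos (x := Pi.single i 1)
    (fun h => one_ne_zero (α := ℝ) (by simpa using congrFun h i))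
  simpa [dotProduct, Pi.single_apply, mulVec, Finset.sum_ite_eq] using this

/-- Diagonal entries of the inverse are antitone in the Loewner order. -/
lemma aux_inv_diag_antitone {n : ℕ} {A P : Matrix (Fin n) (Fin n) ℝ}
    (hA : A.PosDef) (hP : P.PosSemidef) (i : Fin n) :
    (A + P)⁻¹ i i ≤ A⁻¹ i i := by
  set B := A + P with hBdef
  have hB : B.PosDef := hA.add_posSemidef hP
  have hAdet : IsUnit A.det := isUnit_iff_ne_zero.mpr hA.det_pos.ne'
  have hBdet : IsUnit B.det := isUnit_iff_ne_zero.mpr hB.det_pos.ne'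
  have hAinv : A * A⁻¹ = 1 := mul_nonsing_inv A hAdet
  have hAinv' : A⁻¹ * A = 1 := nonsing_inv_mul A hAdet
  have hBinv : B * B⁻¹ = 1 := mul_nonsing_inv B hBdet
  have hBinv' : B⁻¹ * B = 1 := nonsing_inv_mul B hBdet
  have hkey : A⁻¹ - B⁻¹ = B⁻¹ * (P + P * A⁻¹ * P) * B⁻¹ := by
    have h1 : B * A⁻¹ * B = B + (P + P * A⁻¹ * P) := by
      rw [hBdef]
      have hexp : (A + P) * A⁻¹ * (A + P)
          = A * A⁻¹ * A + A * A⁻¹ * P + P * A⁻¹ * A + P * A⁻¹ * P := by noncomm_ring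
      rw [hexp, hAinv, one_mul, one_mul, mul_assoc P A⁻¹ A, hAinv', mul_one]
      noncomm_ring
    calc A⁻¹ - B⁻¹ = B⁻¹ * (B * A⁻¹ * B) * B⁻¹ - B⁻¹ := by
          rw [← mul_assoc, ← mul_assoc, hBinv', one_mul, mul_assoc, hBinv, mul_one]
      _ = B⁻¹ * (B + (P + P * A⁻¹ * P)) * B⁻¹ - B⁻¹ := by rw [h1]
      _ = B⁻¹ * (P + P * A⁻¹ * P) * B⁻¹ := by
          rw [mul_add, add_mul, hBinv', one_mul]
          abel
  have hN : (P + P * A⁻¹ * P).PosSemidef := by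
    have h1 : (Pᴴ * A⁻¹ * P).PosSemidef := hA.inv.posSemidef.conjTranspose_mul_mul_same P
    rw [hP.1] at h1
    exact hP.add h1
  have hpsd : (A⁻¹ - B⁻¹).PosSemidef := by
    have h2 : (B⁻¹ * (P + P * A⁻¹ * P) * (B⁻¹)ᴴ).PosSemidef :=
      hN.mul_mul_conjTranspose_same B⁻¹
    rwa [conjTranspose_nonsing_inv, hB.1, ← hkey] at h2
  have := aux_psd_diag hpsd i
  simp only [Matrix.sub_apply] at this
  linarith

/-- Let `L` be an `n × n` real symmetric positive semidefinite matrix, `α > 0`, `ζ > 0`.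
Then `f₂(S) = log det(L + α D(S) + ζ I)` is monotone nondecreasing and submodular, where
`D(S)` is the diagonal 0/1 matrix with ones at the indices in `S`. -/
theorem logDet_monotone_and_submodular
    (n : ℕ) (L : Matrix (Fin n) (Fin n) ℝ) (hL : L.PosSemidef)
    (α ζ : ℝ) (hα : 0 < α) (hζ : 0 < ζ)
    (f₂ : Finset (Fin n) → ℝ)
    (hf₂ : ∀ S : Finset (Fin n),
      f₂ S = Real.log (Matrix.det
        (L + α • Matrix.diagonal (fun i => if i ∈ S then (1 : ℝ) else 0) + ζ • 1))) :
    (∀ S T : Finset (Fin n), S ⊆ T → f₂ S ≤ f₂ T) ∧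
      (∀ S T : Finset (Fin n), f₂ (S ∪ T) + f₂ (S ∩ T) ≤ f₂ S + f₂ T) := by
  classical
  set M : Finset (Fin n) → Matrix (Fin n) (Fin n) ℝ :=
    fun S => L + α • Matrix.diagonal (fun i => if i ∈ S then (1 : ℝ) else 0) + ζ • 1 with hMdef
  -- positive definiteness
  have hMpd : ∀ S, (M S).PosDef := by
    intro S
    have h1 : (α • Matrix.diagonal (fun i => if i ∈ S then (1 : ℝ) else 0)).PosSemidef := by
      have he : α • Matrix.diagonal (fun i => if i ∈ S then (1 : ℝ) else 0)
          = Matrix.diagonal (fun i => if i ∈ S then α else 0) := by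
        ext a b
        by_cases hab : a = b <;> simp [diagonal_apply, hab, mul_ite]
      rw [he]
      exact PosSemidef.diagonal (fun i => by by_cases h : i ∈ S <;> simp [h, hα.le])
    have h2 : ((ζ : ℝ) • (1 : Matrix (Fin n) (Fin n) ℝ)).PosDef := by
      have he : (ζ : ℝ) • (1 : Matrix (Fin n) (Fin n) ℝ)
          = Matrix.diagonal (fun _ => ζ) := by
        ext a b
        by_cases hab : a = b <;> simp [diagonal_apply, hab, Matrix.one_apply]
      rw [he]
      exact PosDef.diagonal (fun _ => hζ)
    exact Matrix.PosDef.posSemidef_add (hL.add h1) h2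
  have hdetpos : ∀ S, 0 < (M S).det := fun S => (hMpd S).det_pos
  -- inserting an element adds a rank-one diagonal matrix
  have hMinsert : ∀ (S : Finset (Fin n)) (i : Fin n), i ∉ S →
      M (insert i S) = M S + α • Matrix.single i i 1 := by
    intro S i hiS
    show L + _ + _ = L + _ + _ + _
    ext a b
    by_cases hab : a = b
    · subst hab
      by_cases hai : a = i
      · subst hai; simp [diagonal_apply, Matrix.single, Finset.mem_insert, hiS]; ring
      · simp [diagonal_apply, Matrix.single, Finset.mem_insert, hai, Ne.symm hai]
    · simp only [Matrix.add_apply, Matrix.smul_apply, diagonal_apply, if_neg hab,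
        Matrix.single, of_apply, smul_eq_mul, mul_ite, mul_one, mul_zero,
        Matrix.one_apply]
      have hni : ¬(i = a ∧ i = b) := fun ⟨h1, h2⟩ => hab (h1.symm.trans h2)
      simp [hni]
  -- the marginal gain formula
  have hinvpos : ∀ (S : Finset (Fin n)) (i : Fin n), 0 < (M S)⁻¹ i i :=
    fun S i => aux_pd_diag (hMpd S).inv i
  have hmarg : ∀ (S : Finset (Fin n)) (i : Fin n), i ∉ S →
      f₂ (insert i S) = f₂ S + Real.log (1 + α * (M S)⁻¹ i i) := by
    intro S i hiS
    have hadj : (M S).adjugate i i = (M S).det * (M S)⁻¹ i i := by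
      have hi : (M S)⁻¹ i i = ((M S).det)⁻¹ * (M S).adjugate i i := by
        simp [inv_def, Ring.inverse_eq_inv]
      rw [hi, ← mul_assoc, mul_inv_cancel₀ (hdetpos S).ne', one_mul]
    have hdet : (M (insert i S)).det = (M S).det * (1 + α * (M S)⁻¹ i i) := by
      rw [hMinsert S i hiS, aux_det_add_std, hadj]
      ring
    have hpos : 0 < 1 + α * (M S)⁻¹ i i := by nlinarith [hinvpos S i]
    rw [hf₂, hf₂, hdet, Real.log_mul (hdetpos S).ne' hpos.ne']
  -- single-element monotonicity
  have hmono1 : ∀ (S : Finset (Fin n)) (i : Fin n), f₂ S ≤ f₂ (insert i S) := by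
    intro S i
    by_cases hiS : i ∈ S
    · rw [Finset.insert_eq_self.mpr hiS]
    · rw [hmarg S i hiS]
      have hlog : 0 ≤ Real.log (1 + α * (M S)⁻¹ i i) :=
        Real.log_nonneg (by nlinarith [hinvpos S i])
      linarith
  -- inverse diagonal entries are antitone in S
  have hinvle : ∀ (S T : Finset (Fin n)), S ⊆ T → ∀ i, (M T)⁻¹ i i ≤ (M S)⁻¹ i i := by
    intro S T hST i
    have hP : (Matrix.diagonal (fun j => if j ∈ T ∧ j ∉ S then α else 0)).PosSemidef :=
      PosSemidef.diagonal (fun j => by by_cases h : j ∈ T ∧ j ∉ S <;> simp [h, hα.le])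
    have hMT : M T = M S + Matrix.diagonal (fun j => if j ∈ T ∧ j ∉ S then α else 0) := by
      show L + _ + _ = L + _ + _ + _
      ext a b
      by_cases hab : a = b
      · subst hab
        by_cases haS : a ∈ S
        · simp [diagonal_apply, haS, hST haS]
        · by_cases haT : a ∈ T <;> simp [diagonal_apply, haS, haT] <;> try ring
      · simp [diagonal_apply, hab]
    rw [hMT]
    exact aux_inv_diag_antitone (hMpd S) hP i
  -- diminishing returns for a single element
  have hdim : ∀ (X Y : Finset (Fin n)), X ⊆ Y → ∀ i,
      f₂ (insert i Y) - f₂ Y ≤ f₂ (insert i X) - f₂ X := by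
    intro X Y hXY i
    by_cases hiY : i ∈ Y
    · rw [Finset.insert_eq_self.mpr hiY]
      have := hmono1 X i
      linarith
    · have hiX : i ∉ X := fun h => hiY (hXY h)
      rw [hmarg X i hiX, hmarg Y i hiY]
      have h1 := hinvle X Y hXY i
      have h2 := hinvpos Y i
      have hlog : Real.log (1 + α * (M Y)⁻¹ i i) ≤ Real.log (1 + α * (M X)⁻¹ i i) :=
        Real.log_le_log (by nlinarith) (by nlinarith)
      linarith
  -- monotonicity
  have hmonoU : ∀ (U S : Finset (Fin n)), f₂ S ≤ f₂ (S ∪ U) := by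
    intro U
    induction U using Finset.induction_on with
    | empty => intro S; simp
    | @insert i U hiU IH =>
      intro S
      calc f₂ S ≤ f₂ (S ∪ U) := IH S
        _ ≤ f₂ (insert i (S ∪ U)) := hmono1 _ i
        _ = f₂ (S ∪ insert i U) := by rw [Finset.union_insert]
  constructor
  · intro S T hST
    have := hmonoU T S
    rwa [Finset.union_eq_right.mpr hST] at this
  · -- submodularity
    have hsub : ∀ (U A B : Finset (Fin n)), A ⊆ B →
        f₂ (B ∪ U) - f₂ B ≤ f₂ (A ∪ U) - f₂ A := by
      intro U
      induction U using Finset.induction_on with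
      | empty => intro A B _; simp
      | @insert i U hiU IH =>
        intro A B hAB
        have h1 := IH A B hAB
        have h2 := hdim (A ∪ U) (B ∪ U) (Finset.union_subset_union hAB (le_refl U)) i
        rw [Finset.union_insert, Finset.union_insert]
        linarith
    intro S T
    have h := hsub (S \ T) (S ∩ T) T Finset.inter_subset_right
    rw [Finset.union_sdiff_self_eq_union, Finset.union_comm (S ∩ T),
      Finset.sdiff_union_inter, Finset.union_comm T S] at h
    linarith
end

section
/- Let L be an n×n real symmetric matrix with n ≥ 2, let α ≥ 0, ζ > 0, and S ⊆ {1, …, n}, and suppose the matrix M = L + α·D(S) + ζI is positive definite. If log det(M) − (n−1)·log(trace(M)) > log ζ − (n−1)·log(n−1), then λ_min(M) > ζ, and consequently L + α·D(S) is positive definite. -/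
open Matrix

lemma amgm_step' (ι : Type*) (s : Finset ι) (z : ι → ℝ) (hz : ∀ i ∈ s, 0 ≤ z i)
    (m : ℕ) (hm : 0 < m) (hcard : s.card = m) :
    ∏ i ∈ s, z i ≤ ((∑ i ∈ s, z i) / m) ^ m := by
  have h := Real.geom_mean_le_arith_mean_weighted s (fun _ => (m : ℝ)⁻¹) z
    (fun i _ => by positivity)
    (by simp [hcard, mul_inv_cancel₀ (by exact_mod_cast hm.ne' : (m:ℝ) ≠ 0)])
    hz
  have hprod : ∏ i ∈ s, z i ^ ((m : ℝ)⁻¹) = (∏ i ∈ s, z i) ^ ((m:ℝ)⁻¹) :=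
    Real.finset_prod_rpow s z hz _
  rw [hprod] at h
  have hsum : ∑ i ∈ s, (m:ℝ)⁻¹ * z i = (∑ i ∈ s, z i) / m := by
    rw [← Finset.mul_sum]; ring
  rw [hsum] at h
  calc ∏ i ∈ s, z i = (((∏ i ∈ s, z i) ^ ((m:ℝ)⁻¹)) ^ m) :=
        (Real.rpow_inv_natCast_pow (Finset.prod_nonneg hz) hm.ne').symm
    _ ≤ ((∑ i ∈ s, z i) / m) ^ m :=
        pow_le_pow_left₀ (Real.rpow_nonneg (Finset.prod_nonneg hz) _) h m

/-- Let `L` be an `n × n` real symmetric matrix with `n ≥ 2`, `α ≥ 0`, `ζ > 0`,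
`S ⊆ {1, …, n}`, and suppose `M = L + α D(S) + ζ I` is positive definite. If
`log det(M) - (n-1) log(trace(M)) > log ζ - (n-1) log(n-1)`, then `λ_min(M) > ζ`, and
consequently `L + α D(S)` is positive definite. -/
theorem posDef_of_logDet_condition
    (n : ℕ) (hn : 2 ≤ n)
    (L : Matrix (Fin n) (Fin n) ℝ) (hL : L.IsSymm)
    (α ζ : ℝ) (hα : 0 ≤ α) (hζ : 0 < ζ)
    (S : Finset (Fin n))
    (M : Matrix (Fin n) (Fin n) ℝ)
    (hM : M = L + α • Matrix.diagonal (fun i => if i ∈ S then (1 : ℝ) else 0) + ζ • 1)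
    (hMpd : M.PosDef)
    (hcond : Real.log M.det - ((n - 1 : ℕ) : ℝ) * Real.log M.trace >
      Real.log ζ - ((n - 1 : ℕ) : ℝ) * Real.log ((n - 1 : ℕ) : ℝ)) :
    ζ < (⨅ i, hMpd.1.eigenvalues i) ∧
      (L + α • Matrix.diagonal (fun i => if i ∈ S then (1 : ℝ) else 0)).PosDef := by
  have hA := hMpd.1
  set e := hMpd.1.eigenvalues with he
  have hepos : ∀ i, 0 < e i := fun i => hMpd.eigenvalues_pos i
  -- basic setup
  set m := n - 1 with hm
  have hm0 : 0 < m := by omega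
  have hmR : (0:ℝ) < (m:ℝ) := by exact_mod_cast hm0
  have : Nonempty (Fin n) := ⟨⟨0, by omega⟩⟩
  obtain ⟨i0, hi0⟩ : ∃ i0, ∀ i, e i0 ≤ e i := Finite.exists_min e
  have hμ : (⨅ i, e i) = e i0 := by
    apply le_antisymm
    · exact ciInf_le (Set.Finite.bddBelow (Set.finite_range e)) i0
    · exact le_ciInf hi0
  set μ := e i0 with hμdef
  have hμpos : 0 < μ := hepos i0
  -- spectral data
  set U := (hA.eigenvectorUnitary : Matrix (Fin n) (Fin n) ℝ) with hU
  have hUU : U * star U = 1 := (Matrix.mem_unitaryGroup_iff).mp hA.eigenvectorUnitary.2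
  have hUU' : star U * U = 1 := (Matrix.mem_unitaryGroup_iff').mp hA.eigenvectorUnitary.2
  have hspec : M = U * diagonal (RCLike.ofReal ∘ e) * star U := hA.spectral_theorem
  -- trace and det formulas
  have htr : M.trace = ∑ i, e i := by
    calc M.trace = (U * diagonal (RCLike.ofReal ∘ e) * star U).trace := by
          rw [← hspec]
      _ = (star U * U * diagonal (RCLike.ofReal ∘ e)).trace := by rw [trace_mul_cycle]
      _ = ∑ i, e i := by rw [hUU', one_mul, trace_diagonal]; simp
  have hdet : M.det = ∏ i, e i := by
    rw [hA.det_eq_prod_eigenvalues]; simp; rfl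
  have hdetpos : 0 < M.det := hMpd.det_pos
  have htrpos : 0 < M.trace := by
    rw [htr]; exact Finset.sum_pos (fun i _ => hepos i) Finset.univ_nonempty
  -- rearrange the log condition
  have hkey : ζ * M.trace ^ m < M.det * (m:ℝ) ^ m := by
    have h1 : Real.log (ζ * M.trace ^ m) < Real.log (M.det * (m:ℝ) ^ m) := by
      rw [Real.log_mul hζ.ne' (by positivity), Real.log_mul hdetpos.ne' (by positivity),
        Real.log_pow, Real.log_pow]
      linarith [hcond]
    exact (Real.log_lt_log_iff (by positivity) (by positivity)).mp h1
  -- AM-GM on the eigenvalues other than the minimal one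
  have hcard : (Finset.univ.erase i0).card = m := by
    rw [Finset.card_erase_of_mem (Finset.mem_univ i0), Finset.card_univ, Fintype.card_fin]
  have hAMGM : ∏ i ∈ Finset.univ.erase i0, e i ≤
      ((∑ i ∈ Finset.univ.erase i0, e i) / m) ^ m :=
    amgm_step' _ _ _ (fun i _ => (hepos i).le) m hm0 hcard
  have hsumle : ∑ i ∈ Finset.univ.erase i0, e i ≤ M.trace := by
    rw [htr, ← Finset.add_sum_erase _ _ (Finset.mem_univ i0)]
    linarith [hμpos]
  have hprodle : ∏ i ∈ Finset.univ.erase i0, e i ≤ (M.trace / m) ^ m := by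
    refine hAMGM.trans (pow_le_pow_left₀ (div_nonneg (Finset.sum_nonneg fun i _ => (hepos i).le) hmR.le) ?_ m)
    exact div_le_div_of_nonneg_right hsumle hmR.le
  have hdetsplit : M.det = μ * ∏ i ∈ Finset.univ.erase i0, e i := by
    rw [hdet, ← Finset.mul_prod_erase _ _ (Finset.mem_univ i0)]
  -- conclude ζ < μ
  have hζμ : ζ < μ := by
    have h2 : M.det * (m:ℝ) ^ m ≤ μ * M.trace ^ m := by
      calc M.det * (m:ℝ) ^ m = μ * ((∏ i ∈ Finset.univ.erase i0, e i) * (m:ℝ)^m) := by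
            rw [hdetsplit]; ring
        _ ≤ μ * ((M.trace / m) ^ m * (m:ℝ)^m) := by
            apply mul_le_mul_of_nonneg_left _ hμpos.le
            exact mul_le_mul_of_nonneg_right hprodle (by positivity)
        _ = μ * M.trace ^ m := by
            rw [div_pow, div_mul_cancel₀ _ (by positivity : ((m:ℝ)^m) ≠ 0)]
    have h3 : ζ * M.trace ^ m < μ * M.trace ^ m := lt_of_lt_of_le hkey h2
    exact lt_of_mul_lt_mul_right h3 (by positivity)
  refine ⟨hμ ▸ hζμ, ?_⟩
  -- positive definiteness of L + α D(S) = M - ζ • 1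
  have hLD : L + α • Matrix.diagonal (fun i => if i ∈ S then (1 : ℝ) else 0) = M - ζ • 1 := by
    rw [hM]; abel
  rw [hLD]
  have hshift : M - μ • 1 = U * diagonal (fun i => e i - μ) * star U := by
    have hd : diagonal (fun i => e i - μ) = diagonal (RCLike.ofReal ∘ e) - μ • 1 := by
      rw [smul_one_eq_diagonal, ← diagonal_sub]; rfl
    rw [hd, Matrix.mul_sub, Matrix.sub_mul, ← hspec]
    congr 1
    rw [Matrix.mul_smul, Matrix.smul_mul, Matrix.mul_one, hUU]
  have hsplit : M - ζ • 1 = (U * diagonal (fun i => e i - μ) * star U) + (μ - ζ) • 1 := by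
    rw [← hshift, sub_smul, sub_add_sub_cancel]
  rw [hsplit]
  have hpsd : (U * diagonal (fun i => e i - μ) * star U).PosSemidef :=
    (posSemidef_diagonal_iff.mpr fun i => sub_nonneg.2 (hi0 i)).mul_mul_conjTranspose_same U
  have hpd : ((μ - ζ) • (1 : Matrix (Fin n) (Fin n) ℝ)).PosDef := by
    rw [smul_one_eq_diagonal]
    exact Matrix.PosDef.diagonal fun i => sub_pos.2 hζμ
  exact Matrix.PosDef.posSemidef_add hpsd hpd
end
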